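/- arXiv:1809.03836 — 7 statements merged into one kernel-verified Lean document; each statement's English description precedes it below -/
import Mathlib

section
/- Let 𝒢 be a family of 3-element subsets of M₆ = {1,2,3,4,5,6} such that |A ∪ B| = 5 for every two distinct A, B ∈ 𝒢. Then |𝒢| ≤ 4. -/
theorem stmt_5 (𝒢 : Finset (Finset ℕ))
    (h𝒢 : ∀ A ∈ 𝒢, A ⊆ ({1,2,3,4,5,6} : Finset ℕ) ∧ A.card = 3)
    (hunion : ∀ A ∈ 𝒢, ∀ B ∈ 𝒢, A ≠ B → (A ∪ B).card = 5) :
    𝒢.card ≤ 4 := by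
  set U : Finset ℕ := {1,2,3,4,5,6} with hU
  -- pairwise intersections are singletons
  have hinter : ∀ A ∈ 𝒢, ∀ B ∈ 𝒢, A ≠ B → (A ∩ B).card = 1 := by
    intro A hA B hB hAB
    have h1 := Finset.card_union_add_card_inter A B
    rw [hunion A hA B hB hAB, (h𝒢 A hA).2, (h𝒢 B hB).2] at h1
    omega
  -- each element lies in at most 2 members of 𝒢
  have hdeg : ∀ x : ℕ, (𝒢.filter (fun A => x ∈ A)).card ≤ 2 := by
    intro x
    by_contra h
    push_neg at h
    obtain ⟨A, hA, B, hB, C, hC, hAB, hAC, hBC⟩ := Finset.two_lt_card.mp h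
    simp only [Finset.mem_filter] at hA hB hC
    have hsing : ∀ P ∈ 𝒢, ∀ Q ∈ 𝒢, P ≠ Q → x ∈ P → x ∈ Q → P ∩ Q = {x} := by
      intro P hP Q hQ hPQ hxP hxQ
      have := hinter P hP Q hQ hPQ
      obtain ⟨a, ha⟩ := Finset.card_eq_one.mp this
      have : x ∈ P ∩ Q := Finset.mem_inter.mpr ⟨hxP, hxQ⟩
      rw [ha] at this ⊢
      simp at this
      rw [this]
    have hABx := hsing A hA.1 B hB.1 hAB hA.2 hB.2
    have hACx := hsing A hA.1 C hC.1 hAC hA.2 hC.2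
    have hBCx := hsing B hB.1 C hC.1 hBC hB.2 hC.2
    -- |A ∪ B ∪ C| = 7 > 6
    have hABu : (A ∪ B).card = 5 := hunion A hA.1 B hB.1 hAB
    have hint2 : ((A ∪ B) ∩ C) = {x} := by
      rw [Finset.union_inter_distrib_right, hACx, hBCx, Finset.union_self]
    have h2 := Finset.card_union_add_card_inter (A ∪ B) C
    rw [hABu, (h𝒢 C hC.1).2, hint2, Finset.card_singleton] at h2
    have hsub : A ∪ B ∪ C ⊆ U := by
      intro y hy
      simp only [Finset.mem_union] at hy
      rcases hy with (hy | hy) | hy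
      · exact (h𝒢 A hA.1).1 hy
      · exact (h𝒢 B hB.1).1 hy
      · exact (h𝒢 C hC.1).1 hy
    have hUcard : U.card = 6 := by decide
    have := Finset.card_le_card hsub
    omega
  -- double counting
  have hcount : ∑ A ∈ 𝒢, A.card = ∑ x ∈ U, (𝒢.filter (fun A => x ∈ A)).card := by
    have : ∀ A ∈ 𝒢, A.card = ∑ x ∈ U, (if x ∈ A then 1 else 0) := by
      intro A hA
      rw [← Finset.card_filter]
      congr 1
      ext y
      simp only [Finset.mem_filter]
      exact ⟨fun h => ⟨(h𝒢 A hA).1 h, h⟩, fun h => h.2⟩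
    rw [Finset.sum_congr rfl this, Finset.sum_comm]
    apply Finset.sum_congr rfl
    intro x _
    rw [Finset.card_filter]
  have h3 : ∑ A ∈ 𝒢, A.card = 3 * 𝒢.card := by
    rw [Finset.sum_congr rfl (fun A hA => (h𝒢 A hA).2), Finset.sum_const, smul_eq_mul,
      mul_comm]
  have h4 : ∑ x ∈ U, (𝒢.filter (fun A => x ∈ A)).card ≤ 12 := by
    calc ∑ x ∈ U, (𝒢.filter (fun A => x ∈ A)).card ≤ ∑ _x ∈ U, 2 :=
          Finset.sum_le_sum (fun x _ => hdeg x)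
      _ = 12 := by simp [hU]
  omega
end

section
/- Let M₆ = {1,2,3,4,5,6} and let ℱ = {∅, M₆} ∪ 𝒢₃ be union-closed, where 𝒢₃ is a nonempty family of 3-element subsets of M₆. Then there exist at least 3 distinct elements of M₆ each of which belongs to at least half of the sets in ℱ. -/
theorem stmt_8 (𝒢₃ : Finset (Finset ℕ)) (h𝒢₃ : 𝒢₃.Nonempty)
    (h3 : ∀ A ∈ 𝒢₃, A ⊆ ({1,2,3,4,5,6} : Finset ℕ) ∧ A.card = 3)
    (ℱ : Finset (Finset ℕ))
    (hℱ : ℱ = ({∅, ({1,2,3,4,5,6} : Finset ℕ)} : Finset (Finset ℕ)) ∪ 𝒢₃)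
    (hUC : ∀ A ∈ ℱ, ∀ B ∈ ℱ, A ∪ B ∈ ℱ) :
    ∃ x ∈ ({1,2,3,4,5,6} : Finset ℕ), ∃ y ∈ ({1,2,3,4,5,6} : Finset ℕ),
      ∃ z ∈ ({1,2,3,4,5,6} : Finset ℕ), x ≠ y ∧ x ≠ z ∧ y ≠ z ∧
        2 * (ℱ.filter (fun A => x ∈ A)).card ≥ ℱ.card ∧
        2 * (ℱ.filter (fun A => y ∈ A)).card ≥ ℱ.card ∧
        2 * (ℱ.filter (fun A => z ∈ A)).card ≥ ℱ.card := by
  set M : Finset ℕ := {1,2,3,4,5,6} with hM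
  have hMcard : M.card = 6 := by decide
  obtain ⟨A, hA⟩ := h𝒢₃
  obtain ⟨hAsub, hAcard⟩ := h3 A hA
  have hAF : A ∈ ℱ := by rw [hℱ]; simp [hA]
  have hMF : M ∈ ℱ := by rw [hℱ]; simp
  have hAneM : A ≠ M := by
    intro h; rw [h, hMcard] at hAcard; omega
  -- any two distinct members of 𝒢₃ union to M
  have hcompl : ∀ B ∈ 𝒢₃, ∀ C ∈ 𝒢₃, B ≠ C → B ∪ C = M := by
    intro B hB C hC hBC
    have hu : B ∪ C ∈ ℱ :=
      hUC B (by rw [hℱ]; simp [hB]) C (by rw [hℱ]; simp [hC])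
    have h1 := (h3 B hB).2
    have h2 := (h3 C hC).2
    have hinter : (B ∩ C).card < 3 := by
      have hss : B ∩ C ⊂ B := by
        refine Finset.ssubset_iff_subset_ne.2 ⟨Finset.inter_subset_left, ?_⟩
        intro h
        exact hBC (Finset.eq_of_subset_of_card_le
          (Finset.inter_eq_left.mp h) (by omega))
      have := Finset.card_lt_card hss
      omega
    have hcard : 4 ≤ (B ∪ C).card := by
      have := Finset.card_union_add_card_inter B C
      omega
    rw [hℱ] at hu
    simp only [Finset.mem_union, Finset.mem_insert, Finset.mem_singleton] at hu
    rcases hu with (h | h) | h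
    · rw [h] at hcard; simp at hcard
    · exact h
    · have := (h3 _ h).2; omega
  have h𝒢card : 𝒢₃.card ≤ 2 := by
    by_contra h
    push_neg at h
    obtain ⟨B, C, D, hB, hC, hD, hBC, hBD, hCD⟩ := Finset.two_lt_card_iff.mp h
    have hBC' := hcompl B hB C hC hBC
    have hBD' := hcompl B hB D hD hBD
    have hCD' := hcompl C hC D hD hCD
    have hBDdisj : B ∩ D = ∅ := by
      have := Finset.card_union_add_card_inter B D
      rw [hBD', hMcard] at this
      have h1 := (h3 B hB).2
      have h2 := (h3 D hD).2
      exact Finset.card_eq_zero.mp (by omega)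
    have hCDdisj : C ∩ D = ∅ := by
      have := Finset.card_union_add_card_inter C D
      rw [hCD', hMcard] at this
      have h1 := (h3 C hC).2
      have h2 := (h3 D hD).2
      exact Finset.card_eq_zero.mp (by omega)
    obtain ⟨d, hd⟩ : D.Nonempty := by
      rw [← Finset.card_pos, (h3 D hD).2]; omega
    have hdM : d ∈ M := (h3 D hD).1 hd
    rw [← hBC', Finset.mem_union] at hdM
    rcases hdM with h' | h'
    · have : d ∈ B ∩ D := Finset.mem_inter.2 ⟨h', hd⟩
      rw [hBDdisj] at this; simp at this
    · have : d ∈ C ∩ D := Finset.mem_inter.2 ⟨h', hd⟩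
      rw [hCDdisj] at this; simp at this
  have hFcard : ℱ.card ≤ 4 := by
    rw [hℱ]
    calc (({∅, M} : Finset (Finset ℕ)) ∪ 𝒢₃).card
        ≤ ({∅, M} : Finset (Finset ℕ)).card + 𝒢₃.card := Finset.card_union_le _ _
      _ ≤ 2 + 2 := by
          gcongr
          exact Finset.card_insert_le _ _ |>.trans (by simp)
      _ = 4 := rfl
  have hcount : ∀ x ∈ A, ℱ.card ≤ 2 * (ℱ.filter (fun S => x ∈ S)).card := by
    intro x hx
    have hsub : ({A, M} : Finset (Finset ℕ)) ⊆ ℱ.filter (fun S => x ∈ S) := by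
      intro S hS
      simp only [Finset.mem_insert, Finset.mem_singleton] at hS
      rcases hS with rfl | rfl
      · exact Finset.mem_filter.2 ⟨hAF, hx⟩
      · exact Finset.mem_filter.2 ⟨hMF, hAsub hx⟩
    have h2 : 2 ≤ (ℱ.filter (fun S => x ∈ S)).card := by
      calc 2 = ({A, M} : Finset (Finset ℕ)).card := by
              rw [Finset.card_insert_of_notMem (by simpa using hAneM)]; simp
        _ ≤ _ := Finset.card_le_card hsub
    omega
  obtain ⟨x, y, z, hxy, hxz, hyz, hAxyz⟩ := Finset.card_eq_three.mp hAcard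
  have hxA : x ∈ A := by rw [hAxyz]; simp
  have hyA : y ∈ A := by rw [hAxyz]; simp
  have hzA : z ∈ A := by rw [hAxyz]; simp
  exact ⟨x, hAsub hxA, y, hAsub hyA, z, hAsub hzA, hxy, hxz, hyz,
    hcount x hxA, hcount y hyA, hcount z hzA⟩
end

section
/- Let M₆ = {1,2,3,4,5,6} and let ℱ = {∅, M₆} ∪ 𝒢₃ ∪ 𝒢₅ be union-closed, where 𝒢₃ is a nonempty family of 3-element subsets of M₆ and 𝒢₅ is a nonempty family of 5-element subsets of M₆. Then there exist at least 3 distinct elements of M₆ each of which belongs to at least half of the sets in ℱ. -/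
namespace Stmt9Aux

abbrev M6 : Finset ℕ := {1,2,3,4,5,6}

lemma memF (𝒢₃ 𝒢₅ ℱ : Finset (Finset ℕ))
    (hℱ : ℱ = ({∅, M6} : Finset (Finset ℕ)) ∪ 𝒢₃ ∪ 𝒢₅) (C : Finset ℕ) :
    C ∈ ℱ ↔ C = ∅ ∨ C = M6 ∨ C ∈ 𝒢₃ ∨ C ∈ 𝒢₅ := by
  subst hℱ; simp [or_assoc]

/-- two triples intersecting in ≥ 2 points are equal -/
lemma pair (𝒢₃ 𝒢₅ ℱ : Finset (Finset ℕ))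
    (h3 : ∀ A ∈ 𝒢₃, A ⊆ M6 ∧ A.card = 3)
    (h5 : ∀ A ∈ 𝒢₅, A ⊆ M6 ∧ A.card = 5)
    (hℱ : ℱ = ({∅, M6} : Finset (Finset ℕ)) ∪ 𝒢₃ ∪ 𝒢₅)
    (hUC : ∀ A ∈ ℱ, ∀ B ∈ ℱ, A ∪ B ∈ ℱ)
    (B : Finset ℕ) (hB : B ∈ 𝒢₃) (C : Finset ℕ) (hC : C ∈ 𝒢₃)
    (h2 : 2 ≤ (B ∩ C).card) : B = C := by
  have hmem := memF 𝒢₃ 𝒢₅ ℱ hℱ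
  have hB3 := (h3 B hB).2
  have hC3 := (h3 C hC).2
  have hBF : B ∈ ℱ := (hmem B).2 (Or.inr (Or.inr (Or.inl hB)))
  have hCF : C ∈ ℱ := (hmem C).2 (Or.inr (Or.inr (Or.inl hC)))
  have hU : B ∪ C ∈ ℱ := hUC B hBF C hCF
  have hcardU : (B ∪ C).card + (B ∩ C).card = 6 := by
    rw [Finset.card_union_add_card_inter, hB3, hC3]
  have h23 : (B ∩ C).card ≤ 3 := by
    calc (B ∩ C).card ≤ B.card := Finset.card_le_card Finset.inter_subset_left
    _ = 3 := hB3
  have hBle : B.card ≤ (B ∪ C).card := Finset.card_le_card Finset.subset_union_left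
  have hinter3 : (B ∩ C).card = 3 := by
    rcases (hmem (B ∪ C)).1 hU with h | h | h | h
    · rw [h, Finset.card_empty] at hBle; omega
    · have : (B ∪ C).card = 6 := by rw [h]; decide
      omega
    · have := (h3 _ h).2; omega
    · have := (h5 _ h).2; omega
  have hBC : B ∩ C = B := Finset.eq_of_subset_of_card_le Finset.inter_subset_left (by omega)
  have hsub : B ⊆ C := by rw [← hBC]; exact Finset.inter_subset_right
  exact Finset.eq_of_subset_of_card_le hsub (by omega)

/-- the key injection lemma -/
lemma good_of (𝒢₃ 𝒢₅ ℱ : Finset (Finset ℕ))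
    (h3 : ∀ A ∈ 𝒢₃, A ⊆ M6 ∧ A.card = 3)
    (h5 : ∀ A ∈ 𝒢₅, A ⊆ M6 ∧ A.card = 5)
    (hℱ : ℱ = ({∅, M6} : Finset (Finset ℕ)) ∪ 𝒢₃ ∪ 𝒢₅)
    (hUC : ∀ A ∈ ℱ, ∀ B ∈ ℱ, A ∪ B ∈ ℱ)
    (A : Finset ℕ) (hA : A ∈ 𝒢₃) (x : ℕ) (hx : x ∈ A)
    (hX : (M6 \ A ∉ 𝒢₃) ∨ (M6 \ {x} ∉ 𝒢₅)) :
    2 * (ℱ.filter (fun C => x ∈ C)).card ≥ ℱ.card := by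
  obtain ⟨hAM, hA3⟩ := h3 A hA
  have hxM : x ∈ M6 := hAM hx
  have hM6card : M6.card = 6 := by decide
  have hmem := memF 𝒢₃ 𝒢₅ ℱ hℱ
  have hAF : A ∈ ℱ := (hmem A).2 (Or.inr (Or.inr (Or.inl hA)))
  -- any 5-set missing x equals M6 \ {x}
  have h5x : ∀ C ∈ 𝒢₅, x ∉ C → C = M6 \ {x} := by
    intro C hC hxC
    obtain ⟨hCM, hC5⟩ := h5 C hC
    apply Finset.eq_of_subset_of_card_le
    · intro y hy
      simp only [Finset.mem_sdiff, Finset.mem_singleton]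
      exact ⟨hCM hy, fun h => hxC (h ▸ hy)⟩
    · rw [Finset.card_sdiff_of_subset (Finset.singleton_subset_iff.2 hxM), hM6card, hC5]; simp
  have hMx5 : (M6 \ {x}).card = 5 := by
    rw [Finset.card_sdiff_of_subset (Finset.singleton_subset_iff.2 hxM), hM6card]; simp
  -- a triple whose union with A is all of M6 equals M6 \ A
  have h3c : ∀ B ∈ 𝒢₃, (B ∪ A).card = 6 → B = M6 \ A := by
    intro B hB hW
    obtain ⟨hBM, hB3⟩ := h3 B hB
    have hint : (B ∩ A).card = 0 := by
      have := Finset.card_union_add_card_inter B A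
      omega
    rw [Finset.card_eq_zero] at hint
    apply Finset.eq_of_subset_of_card_le
    · intro y hy
      simp only [Finset.mem_sdiff]
      refine ⟨hBM hy, fun hyA => ?_⟩
      have : y ∈ B ∩ A := Finset.mem_inter.2 ⟨hy, hyA⟩
      simp [hint] at this
    · rw [Finset.card_sdiff_of_subset hAM, hM6card, hA3, hB3]
  -- key determination lemma
  have key : ∀ B ∈ ℱ, x ∉ B → ∀ B' ∈ ℱ, x ∉ B' → B ∪ A = B' ∪ A → B = B' := by
    intro B hBF hxB B' hB'F hxB' hW
    have hWF : B ∪ A ∈ ℱ := hUC B hBF A hAF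
    have hAW : A ⊆ B ∪ A := Finset.subset_union_right
    have hAW' : A ⊆ B' ∪ A := Finset.subset_union_right
    -- case on card of W
    have hWcard : (B ∪ A).card = 3 ∨ (B ∪ A).card = 5 ∨ (B ∪ A).card = 6 := by
      have h3le : 3 ≤ (B ∪ A).card := hA3 ▸ Finset.card_le_card hAW
      rcases (hmem (B ∪ A)).1 hWF with h | h | h | h
      · rw [h] at h3le; simp at h3le
      · right; right; rw [h]; decide
      · left; exact (h3 _ h).2
      · right; left; exact (h5 _ h).2
    -- helper: if card W = 3 then contradiction
    rcases hWcard with hWc | hWc | hWc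
    · -- card W = 3 : both B and B' are empty
      have hempty : ∀ D ∈ ℱ, x ∉ D → D ∪ A = B ∪ A → D = ∅ := by
        intro D hDF hxD hDW
        have hDsub : D ⊆ A := by
          have hWA : B ∪ A = A := (Finset.eq_of_subset_of_card_le hAW (by omega)).symm
          rw [← hDW] at hWA
          intro y hy
          exact hWA ▸ (Finset.mem_union.2 (Or.inl hy))
        rcases (hmem D).1 hDF with h | h | h | h
        · exact h
        · exact absurd (h ▸ hxM) hxD
        · exfalso
          have := Finset.eq_of_subset_of_card_le hDsub (by rw [(h3 D h).2, hA3])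
          exact hxD (this ▸ hx)
        · exfalso
          have := Finset.card_le_card hDsub
          rw [(h5 D h).2, hA3] at this; omega
      rw [hempty B hBF hxB rfl, hempty B' hB'F hxB' hW.symm]
    · -- card W = 5 : B and B' are both triples, use pair lemma
      have hBtri : B ∈ 𝒢₃ := by
        rcases (hmem B).1 hBF with h | h | h | h
        · exfalso
          rw [h, Finset.empty_union, hA3] at hWc
          omega
        · exact absurd (h ▸ hxM) hxB
        · exact h
        · exfalso
          have hB5 : B = M6 \ {x} := h5x B h hxB
          have : B ⊆ B ∪ A := Finset.subset_union_left
          have h5le : 5 ≤ (B ∪ A).card := by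
            calc 5 = B.card := ((h5 B h).2).symm
            _ ≤ (B ∪ A).card := Finset.card_le_card this
          -- card W = 5 so B = W, then A ⊆ B, x ∈ B, contra
          have hBW : B = B ∪ A := Finset.eq_of_subset_of_card_le this
            (by rw [(h5 B h).2]; omega)
          exact hxB (hBW ▸ (hAW hx))
      have hB'tri : B' ∈ 𝒢₃ := by
        rcases (hmem B').1 hB'F with h | h | h | h
        · exfalso
          rw [hW, h, Finset.empty_union, hA3] at hWc
          omega
        · exact absurd (h ▸ hxM) hxB'
        · exact h
        · exfalso
          have : B' ⊆ B' ∪ A := Finset.subset_union_left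
          have hB'W : B' = B' ∪ A := Finset.eq_of_subset_of_card_le this
            (by rw [(h5 B' h).2, ← hW]; omega)
          exact hxB' (hB'W ▸ (hAW' hx))
      -- B \ A = W \ A = B' \ A has card 2
      have hBA : B \ A = (B ∪ A) \ A := by
        ext y; simp only [Finset.mem_sdiff, Finset.mem_union]
        constructor
        · rintro ⟨h1, h2⟩; exact ⟨Or.inl h1, h2⟩
        · rintro ⟨h1 | h1, h2⟩; exact ⟨h1, h2⟩; exact absurd h1 h2
      have hB'A : B' \ A = (B' ∪ A) \ A := by
        ext y; simp only [Finset.mem_sdiff, Finset.mem_union]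
        constructor
        · rintro ⟨h1, h2⟩; exact ⟨Or.inl h1, h2⟩
        · rintro ⟨h1 | h1, h2⟩; exact ⟨h1, h2⟩; exact absurd h1 h2
      have hsd : B \ A = B' \ A := by rw [hBA, hB'A, hW]
      have hsdcard : (B \ A).card = 2 := by
        rw [hBA, Finset.card_sdiff_of_subset hAW, hWc, hA3]
      have hsub : B \ A ⊆ B ∩ B' := by
        intro y hy
        refine Finset.mem_inter.2 ⟨(Finset.sdiff_subset) hy, ?_⟩
        rw [hsd] at hy
        exact (Finset.sdiff_subset) hy
      have : 2 ≤ (B ∩ B').card := hsdcard ▸ Finset.card_le_card hsub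
      exact pair 𝒢₃ 𝒢₅ ℱ h3 h5 hℱ hUC B hBtri B' hB'tri this
    · -- card W = 6
      -- then each of B, B' is M6 \ A (if triple) or M6 \ {x} (if 5-set); hX rules out mixing
      have hforce : ∀ D, D ∈ ℱ → x ∉ D → D ∪ A = B ∪ A → D = M6 \ A ∨ D = M6 \ {x} := by
        intro D hDF hxD hDW
        rcases (hmem D).1 hDF with h | h | h | h
        · exfalso
          rw [← hDW, h, Finset.empty_union, hA3] at hWc
          omega
        · exact absurd (h ▸ hxM) hxD
        · exact Or.inl (h3c D h (hDW ▸ hWc))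
        · exact Or.inr (h5x D h hxD)
      have hforce3 : ∀ D, D ∈ ℱ → x ∉ D → D ∪ A = B ∪ A → D = M6 \ A → M6 \ A ∈ 𝒢₃ := by
        intro D hDF hxD hDW hDeq
        rcases (hmem D).1 hDF with h | h | h | h
        · exfalso
          rw [← hDW, h, Finset.empty_union, hA3] at hWc
          omega
        · exact absurd (h ▸ hxM) hxD
        · exact hDeq ▸ h
        · exfalso
          have h1 := (h5 D h).2
          rw [hDeq, Finset.card_sdiff_of_subset hAM, hM6card, hA3] at h1
          omega
      have hforce5 : ∀ D, D ∈ ℱ → x ∉ D → D = M6 \ {x} → M6 \ {x} ∈ 𝒢₅ := by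
        intro D hDF hxD hDeq
        rcases (hmem D).1 hDF with h | h | h | h
        · exfalso
          rw [h] at hDeq
          rw [← hDeq, Finset.card_empty] at hMx5
          omega
        · exfalso
          rw [h] at hDeq
          rw [← hDeq, hM6card] at hMx5
          omega
        · exfalso
          have h1 := (h3 D h).2
          rw [hDeq, hMx5] at h1
          omega
        · exact hDeq ▸ h
      rcases hforce B hBF hxB rfl with hB1 | hB1 <;>
        rcases hforce B' hB'F hxB' hW.symm with hB2 | hB2
      · rw [hB1, hB2]
      · exfalso
        rcases hX with hX | hX
        · exact hX (hforce3 B hBF hxB rfl hB1)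
        · exact hX (hforce5 B' hB'F hxB' hB2)
      · exfalso
        rcases hX with hX | hX
        · exact hX (hforce3 B' hB'F hxB' hW.symm hB2)
        · exact hX (hforce5 B hBF hxB hB1)
      · rw [hB1, hB2]
  -- now the injection gives the cardinality bound
  have hinj : (ℱ.filter (fun C => ¬ x ∈ C)).card ≤ (ℱ.filter (fun C => x ∈ C)).card := by
    apply Finset.card_le_card_of_injOn (fun C => C ∪ A)
    · intro C hC
      simp only [Finset.mem_filter, Finset.mem_coe] at hC ⊢
      exact ⟨hUC C hC.1 A hAF, Finset.mem_union.2 (Or.inr hx)⟩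
    · intro B hB B' hB' hBB'
      simp only [Finset.coe_filter, Set.mem_setOf_eq] at hB hB'
      exact key B hB.1 hB.2 B' hB'.1 hB'.2 hBB'
  have := Finset.card_filter_add_card_filter_not (s := ℱ) (p := fun C => x ∈ C)
  omega

end Stmt9Aux

open Stmt9Aux in
theorem stmt_9 (𝒢₃ 𝒢₅ : Finset (Finset ℕ))
    (h𝒢₃ : 𝒢₃.Nonempty) (h𝒢₅ : 𝒢₅.Nonempty)
    (h3 : ∀ A ∈ 𝒢₃, A ⊆ ({1,2,3,4,5,6} : Finset ℕ) ∧ A.card = 3)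
    (h5 : ∀ A ∈ 𝒢₅, A ⊆ ({1,2,3,4,5,6} : Finset ℕ) ∧ A.card = 5)
    (ℱ : Finset (Finset ℕ))
    (hℱ : ℱ = ({∅, ({1,2,3,4,5,6} : Finset ℕ)} : Finset (Finset ℕ)) ∪ 𝒢₃ ∪ 𝒢₅)
    (hUC : ∀ A ∈ ℱ, ∀ B ∈ ℱ, A ∪ B ∈ ℱ) :
    ∃ x ∈ ({1,2,3,4,5,6} : Finset ℕ), ∃ y ∈ ({1,2,3,4,5,6} : Finset ℕ),
      ∃ z ∈ ({1,2,3,4,5,6} : Finset ℕ), x ≠ y ∧ x ≠ z ∧ y ≠ z ∧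
        2 * (ℱ.filter (fun A => x ∈ A)).card ≥ ℱ.card ∧
        2 * (ℱ.filter (fun A => y ∈ A)).card ≥ ℱ.card ∧
        2 * (ℱ.filter (fun A => z ∈ A)).card ≥ ℱ.card := by
  have hM6card : M6.card = 6 := by decide
  have hmem := memF 𝒢₃ 𝒢₅ ℱ hℱ
  by_cases hI : ∃ A ∈ 𝒢₃, M6 \ A ∉ 𝒢₃
  · obtain ⟨A, hA, hA'⟩ := hI
    obtain ⟨hAM, hA3⟩ := h3 A hA
    obtain ⟨x, y, z, hxy, hxz, hyz, hAxyz⟩ := Finset.card_eq_three.1 hA3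
    have hxA : x ∈ A := by rw [hAxyz]; simp
    have hyA : y ∈ A := by rw [hAxyz]; simp
    have hzA : z ∈ A := by rw [hAxyz]; simp
    exact ⟨x, hAM hxA, y, hAM hyA, z, hAM hzA, hxy, hxz, hyz,
      good_of 𝒢₃ 𝒢₅ ℱ h3 h5 hℱ hUC A hA x hxA (Or.inl hA'),
      good_of 𝒢₃ 𝒢₅ ℱ h3 h5 hℱ hUC A hA y hyA (Or.inl hA'),
      good_of 𝒢₃ 𝒢₅ ℱ h3 h5 hℱ hUC A hA z hzA (Or.inl hA')⟩
  · push_neg at hI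
    obtain ⟨A, hA⟩ := h𝒢₃
    obtain ⟨hAM, hA3⟩ := h3 A hA
    have hA' : M6 \ A ∈ 𝒢₃ := hI A hA
    have htri : ∀ x ∈ M6, ∃ T ∈ 𝒢₃, x ∈ T := by
      intro x hx
      by_cases h : x ∈ A
      · exact ⟨A, hA, h⟩
      · exact ⟨M6 \ A, hA', Finset.mem_sdiff.2 ⟨hx, h⟩⟩
    by_cases hG : 3 ≤ (M6.filter (fun x => M6 \ {x} ∉ 𝒢₅)).card
    · obtain ⟨t, htG, ht3⟩ := Finset.exists_subset_card_eq hG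
      obtain ⟨x, y, z, hxy, hxz, hyz, ht⟩ := Finset.card_eq_three.1 ht3
      have hx' := htG (by rw [ht]; simp : x ∈ t)
      have hy' := htG (by rw [ht]; simp : y ∈ t)
      have hz' := htG (by rw [ht]; simp : z ∈ t)
      simp only [Finset.mem_filter] at hx' hy' hz'
      obtain ⟨Tx, hTx, hxTx⟩ := htri x hx'.1
      obtain ⟨Ty, hTy, hyTy⟩ := htri y hy'.1
      obtain ⟨Tz, hTz, hzTz⟩ := htri z hz'.1
      exact ⟨x, hx'.1, y, hy'.1, z, hz'.1, hxy, hxz, hyz,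
        good_of 𝒢₃ 𝒢₅ ℱ h3 h5 hℱ hUC Tx hTx x hxTx (Or.inr hx'.2),
        good_of 𝒢₃ 𝒢₅ ℱ h3 h5 hℱ hUC Ty hTy y hyTy (Or.inr hy'.2),
        good_of 𝒢₃ 𝒢₅ ℱ h3 h5 hℱ hUC Tz hTz z hzTz (Or.inr hz'.2)⟩
    · -- at least 4 elements x with M6 \ {x} ∈ 𝒢₅, so 𝒢₅.card ≥ 4
      push_neg at hG
      have hfsum := Finset.card_filter_add_card_filter_not (s := M6)
        (p := fun x => M6 \ {x} ∈ 𝒢₅)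
      have hS4 : 4 ≤ (M6.filter (fun x => M6 \ {x} ∈ 𝒢₅)).card := by
        have heq : (M6.filter (fun x => ¬ M6 \ {x} ∈ 𝒢₅)) =
            (M6.filter (fun x => M6 \ {x} ∉ 𝒢₅)) := by rfl
        rw [hM6card] at hfsum
        omega
      have hg5 : 4 ≤ 𝒢₅.card := by
        apply le_trans hS4
        apply Finset.card_le_card_of_injOn (fun x => M6 \ {x})
        · intro a ha
          exact (Finset.mem_filter.1 ha).2
        · intro a ha b hb hab
          simp only [Finset.coe_filter, Set.mem_setOf_eq] at ha hb
          have hab' : M6 \ {a} = M6 \ {b} := hab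
          by_contra hne
          have haM : a ∈ M6 := ha.1
          have : a ∈ M6 \ {b} := Finset.mem_sdiff.2 ⟨haM, by simpa using hne⟩
          rw [← hab'] at this
          simp at this
      -- classification: 𝒢₃ ⊆ {A, M6 \ A}
      have hA'M : M6 \ A ⊆ M6 := Finset.sdiff_subset
      have hA'3 : (M6 \ A).card = 3 := by
        rw [Finset.card_sdiff_of_subset hAM, hM6card, hA3]
      have hclass : ∀ B ∈ 𝒢₃, B = A ∨ B = M6 \ A := by
        intro B hB
        obtain ⟨hBM, hB3⟩ := h3 B hB
        have hsplit : (B ∩ A).card + (B ∩ (M6 \ A)).card = 3 := by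
          have h1 : B ∩ (M6 \ A) = B \ A := by
            ext y
            simp only [Finset.mem_inter, Finset.mem_sdiff]
            exact ⟨fun ⟨h1, _, h3⟩ => ⟨h1, h3⟩, fun ⟨h1, h2⟩ => ⟨h1, hBM h1, h2⟩⟩
          rw [h1, Finset.card_inter_add_card_sdiff, hB3]
        by_cases hc1 : 2 ≤ (B ∩ A).card
        · exact Or.inl (pair 𝒢₃ 𝒢₅ ℱ h3 h5 hℱ hUC B hB A hA hc1)
        · have hc2 : 2 ≤ (B ∩ (M6 \ A)).card := by omega
          exact Or.inr (pair 𝒢₃ 𝒢₅ ℱ h3 h5 hℱ hUC B hB (M6 \ A) hA' hc2)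
      -- every x ∈ M6 is good by counting
      have hgood : ∀ x ∈ M6, 2 * (ℱ.filter (fun C => x ∈ C)).card ≥ ℱ.card := by
        intro x hxM
        obtain ⟨T, hT, hxT⟩ := htri x hxM
        have hTF : T ∈ ℱ := (hmem T).2 (Or.inr (Or.inr (Or.inl hT)))
        have hMF : M6 ∈ ℱ := (hmem M6).2 (Or.inr (Or.inl rfl))
        have hT3 := (h3 T hT).2
        -- upper bound on sets missing x
        set T' : Finset ℕ := if x ∈ A then M6 \ A else A with hT'def
        have hneg : ℱ.filter (fun C => ¬ x ∈ C) ⊆ {∅, T', M6 \ {x}} := by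
          intro C hC
          obtain ⟨hCF, hxC⟩ := Finset.mem_filter.1 hC
          simp only [Finset.mem_insert, Finset.mem_singleton]
          rcases (hmem C).1 hCF with h | h | h | h
          · exact Or.inl h
          · exact absurd (h ▸ hxM) hxC
          · right; left
            rcases hclass C h with h1 | h1
            · rw [hT'def]
              rw [if_neg]
              · exact h1
              · intro hxA; exact hxC (h1 ▸ hxA)
            · rw [hT'def, if_pos]
              · exact h1
              · by_contra hxA
                exact hxC (h1 ▸ Finset.mem_sdiff.2 ⟨hxM, hxA⟩)
          · right; right
            obtain ⟨hCM, hC5⟩ := h5 C h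
            apply Finset.eq_of_subset_of_card_le
            · intro y hy
              simp only [Finset.mem_sdiff, Finset.mem_singleton]
              exact ⟨hCM hy, fun heq => hxC (heq ▸ hy)⟩
            · rw [Finset.card_sdiff_of_subset (Finset.singleton_subset_iff.2 hxM), hM6card, hC5]; simp
        have hnegcard : (ℱ.filter (fun C => ¬ x ∈ C)).card ≤ 3 := by
          calc (ℱ.filter (fun C => ¬ x ∈ C)).card ≤ ({∅, T', M6 \ {x}} : Finset (Finset ℕ)).card :=
            Finset.card_le_card hneg
          _ ≤ 3 := by
            apply le_trans (Finset.card_insert_le _ _)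
            have := Finset.card_insert_le T' ({M6 \ {x}} : Finset (Finset ℕ))
            simp at this ⊢
            omega
        -- lower bound on sets containing x
        have hposlow : 5 ≤ (ℱ.filter (fun C => x ∈ C)).card := by
          have hsub : insert M6 (insert T (𝒢₅.erase (M6 \ {x}))) ⊆
              ℱ.filter (fun C => x ∈ C) := by
            intro C hC
            rw [Finset.mem_filter]
            rcases Finset.mem_insert.1 hC with h | h
            · exact ⟨h ▸ hMF, h ▸ hxM⟩
            rcases Finset.mem_insert.1 h with h | h
            · exact ⟨h ▸ hTF, h ▸ hxT⟩
            · have hC5 : C ∈ 𝒢₅ := Finset.mem_of_mem_erase h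
              have hCne : C ≠ M6 \ {x} := Finset.ne_of_mem_erase h
              refine ⟨(hmem C).2 (Or.inr (Or.inr (Or.inr hC5))), ?_⟩
              by_contra hxC
              apply hCne
              obtain ⟨hCM, hc5⟩ := h5 C hC5
              apply Finset.eq_of_subset_of_card_le
              · intro y hy
                simp only [Finset.mem_sdiff, Finset.mem_singleton]
                exact ⟨hCM hy, fun heq => hxC (heq ▸ hy)⟩
              · rw [Finset.card_sdiff_of_subset (Finset.singleton_subset_iff.2 hxM), hM6card, hc5]; simp
          have hcard1 : 3 ≤ (𝒢₅.erase (M6 \ {x})).card := by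
            have := Finset.pred_card_le_card_erase (s := 𝒢₅) (a := M6 \ {x})
            omega
          have hTnot : T ∉ 𝒢₅.erase (M6 \ {x}) := by
            intro h
            have := (h5 T (Finset.mem_of_mem_erase h)).2
            omega
          have hMnot : M6 ∉ insert T (𝒢₅.erase (M6 \ {x})) := by
            intro h
            rcases Finset.mem_insert.1 h with h | h
            · rw [← h] at hT3; rw [hM6card] at hT3; omega
            · have := (h5 M6 (Finset.mem_of_mem_erase h)).2
              rw [hM6card] at this; omega
          calc 5 ≤ (insert M6 (insert T (𝒢₅.erase (M6 \ {x})))).card := by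
                rw [Finset.card_insert_of_notMem hMnot, Finset.card_insert_of_notMem hTnot]
                omega
          _ ≤ (ℱ.filter (fun C => x ∈ C)).card := Finset.card_le_card hsub
        have := Finset.card_filter_add_card_filter_not (s := ℱ) (p := fun C => x ∈ C)
        omega
      exact ⟨1, by decide, 2, by decide, 3, by decide, by decide, by decide, by decide,
        hgood 1 (by decide), hgood 2 (by decide), hgood 3 (by decide)⟩
end

section
/- Let M₆ = {1,2,3,4,5,6} and let ℱ = {∅, M₆} ∪ 𝒢₃ ∪ 𝒢₄ be union-closed, where 𝒢₃ is a nonempty family of 3-element subsets of M₆ and 𝒢₄ is a nonempty family of 4-element subsets of M₆. Then there exist at least 3 distinct elements of M₆ each of which belongs to at least half of the sets in ℱ. -/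
theorem stmt_10 (𝒢₃ 𝒢₄ : Finset (Finset ℕ))
    (h𝒢₃ : 𝒢₃.Nonempty) (h𝒢₄ : 𝒢₄.Nonempty)
    (h3 : ∀ A ∈ 𝒢₃, A ⊆ ({1,2,3,4,5,6} : Finset ℕ) ∧ A.card = 3)
    (h4 : ∀ A ∈ 𝒢₄, A ⊆ ({1,2,3,4,5,6} : Finset ℕ) ∧ A.card = 4)
    (ℱ : Finset (Finset ℕ))
    (hℱ : ℱ = ({∅, ({1,2,3,4,5,6} : Finset ℕ)} : Finset (Finset ℕ)) ∪ 𝒢₃ ∪ 𝒢₄)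
    (hUC : ∀ A ∈ ℱ, ∀ B ∈ ℱ, A ∪ B ∈ ℱ) :
    ∃ x ∈ ({1,2,3,4,5,6} : Finset ℕ), ∃ y ∈ ({1,2,3,4,5,6} : Finset ℕ),
      ∃ z ∈ ({1,2,3,4,5,6} : Finset ℕ), x ≠ y ∧ x ≠ z ∧ y ≠ z ∧
        2 * (ℱ.filter (fun A => x ∈ A)).card ≥ ℱ.card ∧
        2 * (ℱ.filter (fun A => y ∈ A)).card ≥ ℱ.card ∧
        2 * (ℱ.filter (fun A => z ∈ A)).card ≥ ℱ.card := by
  classical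
  set M : Finset ℕ := {1,2,3,4,5,6} with hMdef
  have hMcard : M.card = 6 := by rw [hMdef]; decide
  obtain ⟨A₀, hA₀⟩ := h𝒢₃
  obtain ⟨B₀, hB₀⟩ := h𝒢₄
  have hc3 : ∀ A ∈ 𝒢₃, A.card = 3 := fun A hA => (h3 A hA).2
  have hc4 : ∀ B ∈ 𝒢₄, B.card = 4 := fun B hB => (h4 B hB).2
  have hs3 : ∀ A ∈ 𝒢₃, A ⊆ M := fun A hA => (h3 A hA).1
  have hs4 : ∀ B ∈ 𝒢₄, B ⊆ M := fun B hB => (h4 B hB).1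
  have hmem3 : ∀ A ∈ 𝒢₃, A ∈ ℱ := by
    intro A hA; rw [hℱ]; simp [Finset.mem_union, hA]
  have hmem4 : ∀ B ∈ 𝒢₄, B ∈ ℱ := by
    intro B hB; rw [hℱ]; simp [Finset.mem_union, hB]
  have hunion : ∀ C D : Finset ℕ, C ∈ ℱ → D ∈ ℱ →
      C ∪ D = ∅ ∨ C ∪ D = M ∨ C ∪ D ∈ 𝒢₃ ∨ C ∪ D ∈ 𝒢₄ := by
    intro C D hCm hDm
    have h := hUC C hCm D hDm
    rw [hℱ] at h
    simpa [Finset.mem_union, Finset.mem_insert, or_assoc] using h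
  have U34 : ∀ A ∈ 𝒢₃, ∀ B ∈ 𝒢₄, A ⊆ B ∨ M \ B ⊆ A := by
    intro A hA B hB
    rcases hunion A B (hmem3 A hA) (hmem4 B hB) with h | h | h | h
    · exfalso
      have hsub : B ⊆ (∅ : Finset ℕ) := h ▸ Finset.subset_union_right
      have := Finset.card_le_card hsub
      rw [hc4 B hB] at this; simp at this
    · right
      intro t ht
      rw [Finset.mem_sdiff] at ht
      have : t ∈ A ∪ B := by rw [h]; exact ht.1
      rcases Finset.mem_union.mp this with h' | h'
      · exact h'
      · exact absurd h' ht.2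
    · exfalso
      have h1 : B.card ≤ (A ∪ B).card := Finset.card_le_card Finset.subset_union_right
      rw [hc3 _ h, hc4 B hB] at h1; omega
    · left
      have h1 : B = A ∪ B := Finset.eq_of_subset_of_card_le Finset.subset_union_right
        (by rw [hc4 _ h, hc4 B hB])
      have h2 : A ⊆ A ∪ B := Finset.subset_union_left
      rw [← h1] at h2; exact h2
  have U44 : ∀ B ∈ 𝒢₄, ∀ B' ∈ 𝒢₄, B ≠ B' → B ∪ B' = M := by
    intro B hB B' hB' hne
    rcases hunion B B' (hmem4 B hB) (hmem4 B' hB') with h | h | h | h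
    · exfalso
      have hsub : B ⊆ (∅ : Finset ℕ) := h ▸ Finset.subset_union_left
      have := Finset.card_le_card hsub
      rw [hc4 B hB] at this; simp at this
    · exact h
    · exfalso
      have h1 : B.card ≤ (B ∪ B').card := Finset.card_le_card Finset.subset_union_left
      rw [hc3 _ h, hc4 B hB] at h1; omega
    · exfalso
      have e1 : B = B ∪ B' := Finset.eq_of_subset_of_card_le Finset.subset_union_left
        (by rw [hc4 _ h, hc4 B hB])
      have e2 : B' = B ∪ B' := Finset.eq_of_subset_of_card_le Finset.subset_union_right
        (by rw [hc4 _ h, hc4 B' hB'])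
      exact hne (e1.trans e2.symm)
  have U33 : ∀ A ∈ 𝒢₃, ∀ A' ∈ 𝒢₃, A ≠ A' → A ∪ A' = M ∨ A ∪ A' ∈ 𝒢₄ := by
    intro A hA A' hA' hne
    rcases hunion A A' (hmem3 _ hA) (hmem3 _ hA') with h | h | h | h
    · exfalso
      have hsub : A ⊆ (∅ : Finset ℕ) := h ▸ Finset.subset_union_left
      have := Finset.card_le_card hsub
      rw [hc3 A hA] at this; simp at this
    · exact Or.inl h
    · exfalso
      have e1 : A = A ∪ A' := Finset.eq_of_subset_of_card_le Finset.subset_union_left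
        (by rw [hc3 _ h, hc3 A hA])
      have e2 : A' = A ∪ A' := Finset.eq_of_subset_of_card_le Finset.subset_union_right
        (by rw [hc3 _ h, hc3 A' hA'])
      exact hne (e1.trans e2.symm)
    · exact Or.inr h
  -- cardinality of ℱ
  have hd1 : Disjoint ({∅, M} : Finset (Finset ℕ)) 𝒢₃ := by
    rw [Finset.disjoint_left]
    intro a ha ha3
    have hca := hc3 a ha3
    rcases Finset.mem_insert.mp ha with rfl | ha
    · simp at hca
    · rw [Finset.mem_singleton] at ha; subst ha; omega
  have hd2 : Disjoint (({∅, M} : Finset (Finset ℕ)) ∪ 𝒢₃) 𝒢₄ := by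
    rw [Finset.disjoint_left]
    intro a ha ha4
    have hca := hc4 a ha4
    rcases Finset.mem_union.mp ha with ha | ha
    · rcases Finset.mem_insert.mp ha with rfl | ha
      · simp at hca
      · rw [Finset.mem_singleton] at ha; subst ha; omega
    · have := hc3 a ha; omega
  have hFcard : ℱ.card = 2 + 𝒢₃.card + 𝒢₄.card := by
    rw [hℱ, Finset.card_union_of_disjoint hd2, Finset.card_union_of_disjoint hd1]
    have h2 : ({∅, M} : Finset (Finset ℕ)).card = 2 := by
      rw [Finset.card_insert_of_notMem, Finset.card_singleton]
      rw [Finset.mem_singleton]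
      intro h
      have := hMcard; rw [← h] at this; simp at this
    omega
  have hfilt : ∀ x ∈ M,
      𝒢₃.card + 𝒢₄.card ≤ 2 * ((𝒢₃.filter (fun A => x ∈ A)).card + (𝒢₄.filter (fun A => x ∈ A)).card) →
      2 * (ℱ.filter (fun A => x ∈ A)).card ≥ ℱ.card := by
    intro x hx hineq
    have h0M : ({∅, M} : Finset (Finset ℕ)).filter (fun A => x ∈ A) = {M} := by
      rw [show ({∅, M} : Finset (Finset ℕ)) = insert ∅ {M} from rfl, Finset.filter_insert,
        if_neg (by simp), Finset.filter_singleton, if_pos hx]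
    have e : ℱ.filter (fun A => x ∈ A) =
        ({M} : Finset (Finset ℕ)) ∪ 𝒢₃.filter (fun A => x ∈ A) ∪ 𝒢₄.filter (fun A => x ∈ A) := by
      rw [hℱ, Finset.filter_union, Finset.filter_union, h0M]
    have dj1 : Disjoint ({M} : Finset (Finset ℕ)) (𝒢₃.filter (fun A => x ∈ A)) := by
      rw [Finset.disjoint_left]
      intro a ha haf
      rw [Finset.mem_singleton] at ha; subst ha
      have := hc3 _ (Finset.mem_of_mem_filter _ haf); omega
    have dj2 : Disjoint (({M} : Finset (Finset ℕ)) ∪ 𝒢₃.filter (fun A => x ∈ A))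
        (𝒢₄.filter (fun A => x ∈ A)) := by
      rw [Finset.disjoint_left]
      intro a ha haf
      have hca := hc4 _ (Finset.mem_of_mem_filter _ haf)
      rcases Finset.mem_union.mp ha with ha | ha
      · rw [Finset.mem_singleton] at ha; subst ha; omega
      · have := hc3 _ (Finset.mem_of_mem_filter _ ha); omega
    rw [ge_iff_le, e, Finset.card_union_of_disjoint dj2, Finset.card_union_of_disjoint dj1,
      Finset.card_singleton, hFcard]
    omega
  have pick3 : ∀ S : Finset ℕ, 3 ≤ S.card →
      ∃ x ∈ S, ∃ y ∈ S, ∃ z ∈ S, x ≠ y ∧ x ≠ z ∧ y ≠ z := by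
    intro S hS
    obtain ⟨x, hx⟩ := Finset.card_pos.mp (show 0 < S.card by omega)
    obtain ⟨y, hy⟩ := Finset.card_pos.mp
      (show 0 < (S.erase x).card by rw [Finset.card_erase_of_mem hx]; omega)
    obtain ⟨z, hz⟩ := Finset.card_pos.mp
      (show 0 < ((S.erase x).erase y).card by
        rw [Finset.card_erase_of_mem hy, Finset.card_erase_of_mem hx]; omega)
    obtain ⟨hzy, hz'⟩ := Finset.mem_erase.mp hz
    obtain ⟨hzx, hzS⟩ := Finset.mem_erase.mp hz'
    obtain ⟨hyx, hyS⟩ := Finset.mem_erase.mp hy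
    exact ⟨x, hx, y, hyS, z, hzS, hyx.symm, hzx.symm, hzy.symm⟩
  have hfinish : ∀ S : Finset ℕ, S ⊆ M → 3 ≤ S.card →
      (∀ x ∈ S, 𝒢₃.card + 𝒢₄.card ≤
        2 * ((𝒢₃.filter (fun A => x ∈ A)).card + (𝒢₄.filter (fun A => x ∈ A)).card)) →
      (∃ x ∈ M, ∃ y ∈ M, ∃ z ∈ M, x ≠ y ∧ x ≠ z ∧ y ≠ z ∧
        2 * (ℱ.filter (fun A => x ∈ A)).card ≥ ℱ.card ∧
        2 * (ℱ.filter (fun A => y ∈ A)).card ≥ ℱ.card ∧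
        2 * (ℱ.filter (fun A => z ∈ A)).card ≥ ℱ.card) := by
    intro S hSM hS hgood
    obtain ⟨x, hx, y, hy, z, hz, hxy, hxz, hyz⟩ := pick3 S hS
    exact ⟨x, hSM hx, y, hSM hy, z, hSM hz, hxy, hxz, hyz,
      hfilt x (hSM hx) (hgood x hx), hfilt y (hSM hy) (hgood y hy),
      hfilt z (hSM hz) (hgood z hz)⟩
  by_cases hcase : ∀ B' ∈ 𝒢₄, B' = B₀
  · -- Case I : 𝒢₄ = {B₀}
    have hG4eq : 𝒢₄ = {B₀} := Finset.eq_singleton_iff_unique_mem.mpr ⟨hB₀, hcase⟩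
    have hg4 : 𝒢₄.card = 1 := by rw [hG4eq, Finset.card_singleton]
    have hd4 : ∀ x ∈ B₀, 1 ≤ (𝒢₄.filter (fun A => x ∈ A)).card := by
      intro x hx
      exact Finset.card_pos.mpr ⟨B₀, Finset.mem_filter.mpr ⟨hB₀, hx⟩⟩
    have hg3pos : 1 ≤ 𝒢₃.card := Finset.card_pos.mpr ⟨A₀, hA₀⟩
    apply hfinish B₀ (hs4 B₀ hB₀) (by rw [hc4 B₀ hB₀]; norm_num)
    intro x hx
    by_cases hall : ∀ A ∈ 𝒢₃, A ⊆ B₀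
    · -- I.a : all 3-sets inside B₀
      have hkey : 𝒢₃.card ≤ (𝒢₃.filter (fun A => x ∈ A)).card + 1 := by
        have hsub : 𝒢₃.filter (fun A => x ∉ A) ⊆ {B₀.erase x} := by
          intro A hA
          rw [Finset.mem_filter] at hA
          rw [Finset.mem_singleton]
          have hAe : A ⊆ B₀.erase x := Finset.subset_erase.mpr ⟨hall A hA.1, hA.2⟩
          apply Finset.eq_of_subset_of_card_le hAe
          rw [Finset.card_erase_of_mem hx, hc3 A hA.1, hc4 B₀ hB₀]
        have h1 := Finset.card_le_card hsub
        rw [Finset.card_singleton] at h1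
        have h2 := Finset.card_filter_add_card_filter_not (s := 𝒢₃)
          (p := fun A => x ∈ A)
        omega
      have := hd4 x hx
      omega
    · -- I.b : some 3-set not inside B₀
      push_neg at hall
      obtain ⟨A₁, hA₁, hA₁n⟩ := hall
      have hA1c : ∀ A ∈ 𝒢₃, A = A₁ ∨ A = M \ A₁ := by
        intro A hA
        by_cases he : A = A₁
        · exact Or.inl he
        · right
          rcases U33 A hA A₁ hA₁ he with h | h
          · have hsub : M \ A₁ ⊆ A := by
              intro t ht
              rw [Finset.mem_sdiff] at ht
              have : t ∈ A ∪ A₁ := by rw [h]; exact ht.1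
              rcases Finset.mem_union.mp this with h' | h'
              · exact h'
              · exact absurd h' ht.2
            have hcs : (M \ A₁).card = 3 := by
              rw [Finset.card_sdiff_of_subset (hs3 A₁ hA₁), hMcard, hc3 A₁ hA₁]
            exact (Finset.eq_of_subset_of_card_le hsub (by rw [hcs, hc3 A hA])).symm
          · rw [hG4eq, Finset.mem_singleton] at h
            exact absurd (h ▸ Finset.subset_union_right) hA₁n
      have hsubpair : 𝒢₃ ⊆ {A₁, M \ A₁} := by
        intro A hA
        rcases hA1c A hA with rfl | h
        · exact Finset.mem_insert_self _ _
        · rw [h]; exact Finset.mem_insert_of_mem (Finset.mem_singleton_self _)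
      have hg3le : 𝒢₃.card ≤ 2 := by
        calc 𝒢₃.card ≤ ({A₁, M \ A₁} : Finset (Finset ℕ)).card := Finset.card_le_card hsubpair
          _ ≤ 2 := by
            apply le_trans (Finset.card_insert_le _ _)
            rw [Finset.card_singleton]
      by_cases hg3 : 𝒢₃.card ≤ 1
      · have := hd4 x hx; omega
      · have hg3e : 𝒢₃.card = 2 := by omega
        have heq : 𝒢₃ = {A₁, M \ A₁} := by
          apply Finset.eq_of_subset_of_card_le hsubpair
          apply le_trans (Finset.card_insert_le _ _)
          rw [Finset.card_singleton]; omega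
        have hm : x ∈ A₁ ∨ x ∈ M \ A₁ := by
          by_cases hxa : x ∈ A₁
          · exact Or.inl hxa
          · exact Or.inr (Finset.mem_sdiff.mpr ⟨hs4 B₀ hB₀ hx, hxa⟩)
        have hd3 : 1 ≤ (𝒢₃.filter (fun A => x ∈ A)).card := by
          rcases hm with hm | hm
          · exact Finset.card_pos.mpr ⟨A₁, Finset.mem_filter.mpr ⟨hA₁, hm⟩⟩
          · refine Finset.card_pos.mpr ⟨M \ A₁, Finset.mem_filter.mpr ⟨?_, hm⟩⟩
            rw [heq]; exact Finset.mem_insert_of_mem (Finset.mem_singleton_self _)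
        have := hd4 x hx; omega
  · -- Case II : at least two 4-sets
    push_neg at hcase
    obtain ⟨B₁, hB₁, hB₁n⟩ := hcase
    have hST : ∀ A ∈ 𝒢₃, ∀ C ∈ 𝒢₄, ∀ D ∈ 𝒢₄, C ≠ D → A ⊆ C → A ⊆ D → False := by
      intro A hA C hC D hD hne h1 h2
      have hcap : (C ∩ D).card = 2 := by
        have hci := Finset.card_union_add_card_inter C D
        rw [U44 C hC D hD hne, hMcard, hc4 C hC, hc4 D hD] at hci
        omega
      have := Finset.card_le_card (Finset.subset_inter h1 h2)
      rw [hcap, hc3 A hA] at this; omega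
    have hCC : ∀ A ∈ 𝒢₃, ∀ C ∈ 𝒢₄, ∀ D ∈ 𝒢₄, C ≠ D → M \ C ⊆ A → M \ D ⊆ A → False := by
      intro A hA C hC D hD hne h1 h2
      have hdisj : Disjoint (M \ C) (M \ D) := by
        rw [Finset.disjoint_left]
        intro t ht htD
        rw [Finset.mem_sdiff] at ht htD
        have : t ∈ C ∪ D := by rw [U44 C hC D hD hne]; exact ht.1
        rcases Finset.mem_union.mp this with h | h
        · exact ht.2 h
        · exact htD.2 h
      have hsub : (M \ C) ∪ (M \ D) ⊆ A := Finset.union_subset h1 h2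
      have := Finset.card_le_card hsub
      rw [Finset.card_union_of_disjoint hdisj, Finset.card_sdiff_of_subset (hs4 C hC),
        Finset.card_sdiff_of_subset (hs4 D hD), hMcard, hc4 C hC, hc4 D hD, hc3 A hA] at this
      omega
    have hG4eq : ∀ B ∈ 𝒢₄, B = B₀ ∨ B = B₁ := by
      intro B hB
      by_contra hcon
      push_neg at hcon
      obtain ⟨hn0, hn1⟩ := hcon
      rcases U34 A₀ hA₀ B hB with h | h
      · rcases U34 A₀ hA₀ B₀ hB₀ with h0 | h0
        · exact hST A₀ hA₀ B hB B₀ hB₀ hn0 h h0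
        · rcases U34 A₀ hA₀ B₁ hB₁ with h1 | h1
          · exact hST A₀ hA₀ B hB B₁ hB₁ hn1 h h1
          · exact hCC A₀ hA₀ B₀ hB₀ B₁ hB₁ hB₁n.symm h0 h1
      · rcases U34 A₀ hA₀ B₀ hB₀ with h0 | h0
        · rcases U34 A₀ hA₀ B₁ hB₁ with h1 | h1
          · exact hST A₀ hA₀ B₀ hB₀ B₁ hB₁ hB₁n.symm h0 h1
          · exact hCC A₀ hA₀ B hB B₁ hB₁ hn1 h h1
        · exact hCC A₀ hA₀ B hB B₀ hB₀ hn0 h h0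
    have hpairc : ({B₀, B₁} : Finset (Finset ℕ)).card = 2 := by
      rw [Finset.card_insert_of_notMem (Finset.notMem_singleton.mpr hB₁n.symm),
        Finset.card_singleton]
    have hg4eq2 : 𝒢₄ = {B₀, B₁} := by
      apply Finset.Subset.antisymm
      · intro B hB
        rcases hG4eq B hB with rfl | rfl
        · exact Finset.mem_insert_self _ _
        · exact Finset.mem_insert_of_mem (Finset.mem_singleton_self _)
      · intro B hB
        rcases Finset.mem_insert.mp hB with rfl | hB
        · exact hB₀
        · rw [Finset.mem_singleton] at hB; subst hB; exact hB₁
    have hg4c : 𝒢₄.card = 2 := by rw [hg4eq2, hpairc]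
    have hdich : ∀ A ∈ 𝒢₃, (A ⊆ B₀ ∧ M \ B₁ ⊆ A) ∨ (A ⊆ B₁ ∧ M \ B₀ ⊆ A) := by
      intro A hA
      rcases U34 A hA B₀ hB₀ with h0 | h0 <;> rcases U34 A hA B₁ hB₁ with h1 | h1
      · exact (hST A hA B₀ hB₀ B₁ hB₁ hB₁n.symm h0 h1).elim
      · exact Or.inl ⟨h0, h1⟩
      · exact Or.inr ⟨h1, h0⟩
      · exact (hCC A hA B₀ hB₀ B₁ hB₁ hB₁n.symm h0 h1).elim
    have hIc : (B₀ ∩ B₁).card = 2 := by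
      have hci := Finset.card_union_add_card_inter B₀ B₁
      rw [U44 B₀ hB₀ B₁ hB₁ hB₁n.symm, hMcard, hc4 B₀ hB₀, hc4 B₁ hB₁] at hci
      omega
    obtain ⟨a, b, hab, hI⟩ := Finset.card_eq_two.mp hIc
    have haI : a ∈ B₀ ∩ B₁ := by rw [hI]; exact Finset.mem_insert_self _ _
    have hbI : b ∈ B₀ ∩ B₁ := by
      rw [hI]; exact Finset.mem_insert_of_mem (Finset.mem_singleton_self _)
    have hcoverI : ∀ A ∈ 𝒢₃, a ∈ A ∨ b ∈ A := by
      intro A hA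
      have hex : ∃ t ∈ A, t ∈ B₀ ∩ B₁ := by
        rcases hdich A hA with ⟨hsB, hsP⟩ | ⟨hsB, hsP⟩
        · have hAB1 : ∃ t ∈ A, t ∈ B₁ := by
            by_contra hcon
            push_neg at hcon
            have hsub : A ⊆ M \ B₁ := fun t ht =>
              Finset.mem_sdiff.mpr ⟨hs3 A hA ht, hcon t ht⟩
            have := Finset.card_le_card hsub
            rw [hc3 A hA, Finset.card_sdiff_of_subset (hs4 B₁ hB₁), hMcard, hc4 B₁ hB₁] at this
            omega
          obtain ⟨t, ht, htB1⟩ := hAB1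
          exact ⟨t, ht, Finset.mem_inter.mpr ⟨hsB ht, htB1⟩⟩
        · have hAB0 : ∃ t ∈ A, t ∈ B₀ := by
            by_contra hcon
            push_neg at hcon
            have hsub : A ⊆ M \ B₀ := fun t ht =>
              Finset.mem_sdiff.mpr ⟨hs3 A hA ht, hcon t ht⟩
            have := Finset.card_le_card hsub
            rw [hc3 A hA, Finset.card_sdiff_of_subset (hs4 B₀ hB₀), hMcard, hc4 B₀ hB₀] at this
            omega
          obtain ⟨t, ht, htB0⟩ := hAB0
          exact ⟨t, ht, Finset.mem_inter.mpr ⟨htB0, hsB ht⟩⟩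
      obtain ⟨t, ht, htI⟩ := hex
      rw [hI] at htI
      rcases Finset.mem_insert.mp htI with rfl | htI
      · exact Or.inl ht
      · rw [Finset.mem_singleton] at htI; subst htI; exact Or.inr ht
    have hcover3 : 𝒢₃.card ≤ (𝒢₃.filter (fun A => a ∈ A)).card +
        (𝒢₃.filter (fun A => b ∈ A)).card := by
      have hsub : 𝒢₃ ⊆ 𝒢₃.filter (fun A => a ∈ A) ∪ 𝒢₃.filter (fun A => b ∈ A) := by
        intro A hA
        rcases hcoverI A hA with h | h
        · exact Finset.mem_union_left _ (Finset.mem_filter.mpr ⟨hA, h⟩)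
        · exact Finset.mem_union_right _ (Finset.mem_filter.mpr ⟨hA, h⟩)
      exact (Finset.card_le_card hsub).trans (Finset.card_union_le _ _)
    have hcoverP : 𝒢₃.card ≤ (𝒢₃.filter (fun A => M \ B₀ ⊆ A)).card +
        (𝒢₃.filter (fun A => M \ B₁ ⊆ A)).card := by
      have hsub : 𝒢₃ ⊆ 𝒢₃.filter (fun A => M \ B₀ ⊆ A) ∪
          𝒢₃.filter (fun A => M \ B₁ ⊆ A) := by
        intro A hA
        rcases hdich A hA with ⟨_, h⟩ | ⟨_, h⟩
        · exact Finset.mem_union_right _ (Finset.mem_filter.mpr ⟨hA, h⟩)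
        · exact Finset.mem_union_left _ (Finset.mem_filter.mpr ⟨hA, h⟩)
      exact (Finset.card_le_card hsub).trans (Finset.card_union_le _ _)
    have hd4ab : ∀ t ∈ B₀ ∩ B₁, 2 ≤ (𝒢₄.filter (fun A => t ∈ A)).card := by
      intro t ht
      have hsub : ({B₀, B₁} : Finset (Finset ℕ)) ⊆ 𝒢₄.filter (fun A => t ∈ A) := by
        intro B hB
        rcases Finset.mem_insert.mp hB with rfl | hB
        · exact Finset.mem_filter.mpr ⟨hB₀, (Finset.mem_inter.mp ht).1⟩
        · rw [Finset.mem_singleton] at hB; subst hB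
          exact Finset.mem_filter.mpr ⟨hB₁, (Finset.mem_inter.mp ht).2⟩
      have := Finset.card_le_card hsub
      rw [hpairc] at this; omega
    have key : ∀ C ∈ 𝒢₄, ∀ D ∈ 𝒢₄, C ≠ D →
        𝒢₃.card ≤ (𝒢₃.filter (fun A => M \ C ⊆ A)).card +
          (𝒢₃.filter (fun A => M \ D ⊆ A)).card →
        (𝒢₃.filter (fun A => M \ C ⊆ A)).card ≤ (𝒢₃.filter (fun A => M \ D ⊆ A)).card →
        ∀ x ∈ M \ D, 𝒢₃.card + 𝒢₄.card ≤
          2 * ((𝒢₃.filter (fun A => x ∈ A)).card + (𝒢₄.filter (fun A => x ∈ A)).card) := by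
      intro C hC D hD hne hcov hle x hx
      have hmono : 𝒢₃.filter (fun A => M \ D ⊆ A) ⊆ 𝒢₃.filter (fun A => x ∈ A) := by
        intro A hA
        rw [Finset.mem_filter] at hA ⊢
        exact ⟨hA.1, hA.2 hx⟩
      have h1 := Finset.card_le_card hmono
      have hxC : x ∈ C := by
        have hxm := Finset.mem_sdiff.mp hx
        have : x ∈ C ∪ D := by rw [U44 C hC D hD hne]; exact hxm.1
        rcases Finset.mem_union.mp this with h | h
        · exact h
        · exact absurd h hxm.2
      have h2 : 1 ≤ (𝒢₄.filter (fun A => x ∈ A)).card :=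
        Finset.card_pos.mpr ⟨C, Finset.mem_filter.mpr ⟨hC, hxC⟩⟩
      omega
    have hzout : ∃ z ∈ B₀ ∩ B₁, 𝒢₃.card ≤ 2 * (𝒢₃.filter (fun A => z ∈ A)).card := by
      rcases le_total ((𝒢₃.filter (fun A => a ∈ A)).card)
        ((𝒢₃.filter (fun A => b ∈ A)).card) with h | h
      · exact ⟨b, hbI, by omega⟩
      · exact ⟨a, haI, by omega⟩
    obtain ⟨z, hzI, hz3⟩ := hzout
    have hzgood : 𝒢₃.card + 𝒢₄.card ≤
        2 * ((𝒢₃.filter (fun A => z ∈ A)).card + (𝒢₄.filter (fun A => z ∈ A)).card) := by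
      have := hd4ab z hzI; omega
    have hzM : z ∈ M := hs4 B₀ hB₀ (Finset.mem_inter.mp hzI).1
    rcases le_total ((𝒢₃.filter (fun A => M \ B₀ ⊆ A)).card)
      ((𝒢₃.filter (fun A => M \ B₁ ⊆ A)).card) with hle | hle
    · -- witnesses from M \ B₁ together with z
      have hPc : (M \ B₁).card = 2 := by
        rw [Finset.card_sdiff_of_subset (hs4 B₁ hB₁), hMcard, hc4 B₁ hB₁]
      obtain ⟨x, y, hxy, hP⟩ := Finset.card_eq_two.mp hPc
      have hxP : x ∈ M \ B₁ := by rw [hP]; exact Finset.mem_insert_self _ _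
      have hyP : y ∈ M \ B₁ := by
        rw [hP]; exact Finset.mem_insert_of_mem (Finset.mem_singleton_self _)
      have hxg := key B₀ hB₀ B₁ hB₁ hB₁n.symm hcoverP hle x hxP
      have hyg := key B₀ hB₀ B₁ hB₁ hB₁n.symm hcoverP hle y hyP
      have hzB1 : z ∈ B₁ := (Finset.mem_inter.mp hzI).2
      have hxz : x ≠ z := fun h => (Finset.mem_sdiff.mp hxP).2 (h ▸ hzB1)
      have hyz : y ≠ z := fun h => (Finset.mem_sdiff.mp hyP).2 (h ▸ hzB1)
      exact ⟨x, (Finset.mem_sdiff.mp hxP).1, y, (Finset.mem_sdiff.mp hyP).1, z, hzM,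
        hxy, hxz, hyz,
        hfilt x (Finset.mem_sdiff.mp hxP).1 hxg,
        hfilt y (Finset.mem_sdiff.mp hyP).1 hyg,
        hfilt z hzM hzgood⟩
    · -- witnesses from M \ B₀ together with z
      have hPc : (M \ B₀).card = 2 := by
        rw [Finset.card_sdiff_of_subset (hs4 B₀ hB₀), hMcard, hc4 B₀ hB₀]
      obtain ⟨x, y, hxy, hP⟩ := Finset.card_eq_two.mp hPc
      have hxP : x ∈ M \ B₀ := by rw [hP]; exact Finset.mem_insert_self _ _
      have hyP : y ∈ M \ B₀ := by
        rw [hP]; exact Finset.mem_insert_of_mem (Finset.mem_singleton_self _)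
      have hxg := key B₁ hB₁ B₀ hB₀ hB₁n (by omega) hle x hxP
      have hyg := key B₁ hB₁ B₀ hB₀ hB₁n (by omega) hle y hyP
      have hzB0 : z ∈ B₀ := (Finset.mem_inter.mp hzI).1
      have hxz : x ≠ z := fun h => (Finset.mem_sdiff.mp hxP).2 (h ▸ hzB0)
      have hyz : y ≠ z := fun h => (Finset.mem_sdiff.mp hyP).2 (h ▸ hzB0)
      exact ⟨x, (Finset.mem_sdiff.mp hxP).1, y, (Finset.mem_sdiff.mp hyP).1, z, hzM,
        hxy, hxz, hyz,
        hfilt x (Finset.mem_sdiff.mp hxP).1 hxg,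
        hfilt y (Finset.mem_sdiff.mp hyP).1 hyg,
        hfilt z hzM hzgood⟩
end

section
/- Let M₆ = {1,2,3,4,5,6} and let ℱ = {∅, M₆} ∪ 𝒢₃ ∪ 𝒢₄ ∪ 𝒢₅ be union-closed, where 𝒢ᵢ is a nonempty family of i-element subsets of M₆ for i = 3, 4, 5. Then there exist at least 3 distinct elements of M₆ each of which belongs to at least half of the sets in ℱ. -/
lemma sum_deg (G : Finset (Finset ℕ)) (X : Finset ℕ) :
    ∑ x ∈ X, (G.filter (fun A => x ∈ A)).card = ∑ A ∈ G, (X ∩ A).card := by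
  have h1 : ∀ x, (G.filter (fun A => x ∈ A)).card = ∑ A ∈ G, if x ∈ A then 1 else 0 :=
    fun x => Finset.card_filter _ _
  simp_rw [h1]
  rw [Finset.sum_comm]
  refine Finset.sum_congr rfl fun A _ => ?_
  rw [← Finset.card_filter, Finset.filter_mem_eq_inter]

lemma card_filter_superset (G : Finset (Finset ℕ)) (H M : Finset ℕ) (k : ℕ)
    (hG : ∀ A ∈ G, A ⊆ M ∧ A.card = k) :
    (G.filter (fun A => H ⊆ A)).card ≤ ((M \ H).powersetCard (k - H.card)).card := by
  apply Finset.card_le_card_of_injOn (fun A => A \ H)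
  · intro A hA
    rw [Finset.mem_coe, Finset.mem_filter] at hA
    obtain ⟨hAG, hHA⟩ := hA
    obtain ⟨hsub, hcard⟩ := hG A hAG
    rw [Finset.mem_coe, Finset.mem_powersetCard]
    exact ⟨Finset.sdiff_subset_sdiff hsub (le_refl _), by rw [Finset.card_sdiff_of_subset hHA, hcard]⟩
  · intro A hA B hB hEq
    rw [Finset.coe_filter] at hA hB
    simp only [Set.mem_setOf_eq] at hA hB
    calc A = (A \ H) ∪ H := (Finset.sdiff_union_of_subset hA.2).symm
    _ = (B \ H) ∪ H := by simp only at hEq; rw [hEq]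
    _ = B := Finset.sdiff_union_of_subset hB.2

set_option maxHeartbeats 1000000 in
theorem stmt_11 (𝒢₃ 𝒢₄ 𝒢₅ : Finset (Finset ℕ))
    (h𝒢₃ : 𝒢₃.Nonempty) (h𝒢₄ : 𝒢₄.Nonempty) (h𝒢₅ : 𝒢₅.Nonempty)
    (h3 : ∀ A ∈ 𝒢₃, A ⊆ ({1,2,3,4,5,6} : Finset ℕ) ∧ A.card = 3)
    (h4 : ∀ A ∈ 𝒢₄, A ⊆ ({1,2,3,4,5,6} : Finset ℕ) ∧ A.card = 4)
    (h5 : ∀ A ∈ 𝒢₅, A ⊆ ({1,2,3,4,5,6} : Finset ℕ) ∧ A.card = 5)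
    (ℱ : Finset (Finset ℕ))
    (hℱ : ℱ = ({∅, ({1,2,3,4,5,6} : Finset ℕ)} : Finset (Finset ℕ)) ∪ 𝒢₃ ∪ 𝒢₄ ∪ 𝒢₅)
    (hUC : ∀ A ∈ ℱ, ∀ B ∈ ℱ, A ∪ B ∈ ℱ) :
    ∃ x ∈ ({1,2,3,4,5,6} : Finset ℕ), ∃ y ∈ ({1,2,3,4,5,6} : Finset ℕ),
      ∃ z ∈ ({1,2,3,4,5,6} : Finset ℕ), x ≠ y ∧ x ≠ z ∧ y ≠ z ∧
        2 * (ℱ.filter (fun A => x ∈ A)).card ≥ ℱ.card ∧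
        2 * (ℱ.filter (fun A => y ∈ A)).card ≥ ℱ.card ∧
        2 * (ℱ.filter (fun A => z ∈ A)).card ≥ ℱ.card := by
  classical
  set M : Finset ℕ := ({1,2,3,4,5,6} : Finset ℕ) with hMdef
  set 𝒢 : Finset (Finset ℕ) := 𝒢₃ ∪ 𝒢₄ ∪ 𝒢₅ with h𝒢def
  set n₃ := 𝒢₃.card with hn₃def
  set n₄ := 𝒢₄.card with hn₄def
  set n₅ := 𝒢₅.card with hn₅def
  set m := n₃ + n₄ + n₅ with hmdef
  set d : ℕ → ℕ := fun x => (𝒢.filter (fun A => x ∈ A)).card with hddef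
  set H : Finset ℕ := M.filter (fun x => m ≤ 2 * d x) with hHdef
  clear_value M 𝒢 n₃ n₄ n₅ m d H
  have hMcard : M.card = 6 := by rw [hMdef]; decide
  have hn₃ : 1 ≤ n₃ := by rw [hn₃def]; exact Finset.Nonempty.card_pos h𝒢₃
  have hn₄ : 1 ≤ n₄ := by rw [hn₄def]; exact Finset.Nonempty.card_pos h𝒢₄
  have hn₅ : 1 ≤ n₅ := by rw [hn₅def]; exact Finset.Nonempty.card_pos h𝒢₅
  have h𝒢mem : ∀ A ∈ 𝒢, A ⊆ M ∧ (A.card = 3 ∨ A.card = 4 ∨ A.card = 5) := by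
    intro A hA
    rw [h𝒢def, Finset.mem_union, Finset.mem_union] at hA
    rcases hA with (hA | hA) | hA
    · exact ⟨(h3 A hA).1, Or.inl (h3 A hA).2⟩
    · exact ⟨(h4 A hA).1, Or.inr (Or.inl (h4 A hA).2)⟩
    · exact ⟨(h5 A hA).1, Or.inr (Or.inr (h5 A hA).2)⟩
  have hdisj34 : Disjoint 𝒢₃ 𝒢₄ := Finset.disjoint_left.mpr fun A hA hB => by
    have := (h3 A hA).2; have := (h4 A hB).2; omega
  have hdisj345 : Disjoint (𝒢₃ ∪ 𝒢₄) 𝒢₅ := by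
    rw [Finset.disjoint_union_left]
    constructor
    · exact Finset.disjoint_left.mpr fun A hA hB => by
        have := (h3 A hA).2; have := (h5 A hB).2; omega
    · exact Finset.disjoint_left.mpr fun A hA hB => by
        have := (h4 A hA).2; have := (h5 A hB).2; omega
  have h𝒢card : 𝒢.card = m := by
    rw [h𝒢def, Finset.card_union_of_disjoint hdisj345, Finset.card_union_of_disjoint hdisj34,
      hmdef, hn₃def, hn₄def, hn₅def]
  have hEnM : (∅ : Finset ℕ) ∉ 𝒢 ∧ M ∉ 𝒢 := by
    constructor
    · intro h; rcases (h𝒢mem ∅ h).2 with h' | h' | h' <;> simp at h'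
    · intro h; have := (h𝒢mem M h).2; rw [hMcard] at this; omega
  have hF' : ℱ = {∅, M} ∪ 𝒢 := by
    rw [hℱ, h𝒢def]; simp only [Finset.union_assoc]
  have hFcard : ℱ.card = m + 2 := by
    rw [hF', Finset.card_union_of_disjoint (by
      rw [Finset.disjoint_left]
      intro A hA
      rcases Finset.mem_insert.mp hA with h | h
      · subst h; exact hEnM.1
      · rw [Finset.mem_singleton] at h; subst h; exact hEnM.2)]
    rw [Finset.card_insert_of_notMem (by
      rw [Finset.mem_singleton]; intro h; rw [← h] at hMcard; simp at hMcard),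
      Finset.card_singleton, h𝒢card]
    omega
  have h𝒢F : ∀ A ∈ 𝒢, A ∈ ℱ := by
    intro A hA; rw [hF']; exact Finset.mem_union_right _ hA
  have hfilterF : ∀ x ∈ M, (ℱ.filter (fun A => x ∈ A)).card = d x + 1 := by
    intro x hx
    rw [hF', Finset.filter_union]
    have h1 : ({∅, M} : Finset (Finset ℕ)).filter (fun A => x ∈ A) = {M} := by
      rw [Finset.filter_insert]
      simp only [Finset.notMem_empty, if_false]
      rw [Finset.filter_singleton, if_pos hx]
    rw [h1, Finset.card_union_of_disjoint (by
      rw [Finset.disjoint_left]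
      intro A hA
      rw [Finset.mem_singleton] at hA; subst hA
      intro hc; exact hEnM.2 (Finset.mem_of_mem_filter _ hc))]
    rw [Finset.card_singleton]
    have hdx : d x = (𝒢.filter (fun A => x ∈ A)).card := by rw [hddef]
    omega
  have mem5 : ∀ A ∈ ℱ, A.card = 5 → A ∈ 𝒢₅ := by
    intro A hA hc
    rw [hℱ] at hA
    simp only [Finset.mem_union, Finset.mem_insert, Finset.mem_singleton] at hA
    rcases hA with (((h | h) | h) | h) | h
    · subst h; simp at hc
    · subst h; rw [hMcard] at hc; omega
    · have := (h3 A h).2; omega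
    · have := (h4 A h).2; omega
    · exact h
  have mem4 : ∀ A ∈ ℱ, A.card = 4 → A ∈ 𝒢₄ := by
    intro A hA hc
    rw [hℱ] at hA
    simp only [Finset.mem_union, Finset.mem_insert, Finset.mem_singleton] at hA
    rcases hA with (((h | h) | h) | h) | h
    · subst h; simp at hc
    · subst h; rw [hMcard] at hc; omega
    · have := (h3 A h).2; omega
    · exact h
    · have := (h5 A h).2; omega
  have hsum : ∀ X : Finset ℕ, ∑ x ∈ X, d x = ∑ A ∈ 𝒢, (X ∩ A).card := by
    intro X; rw [hddef]; exact sum_deg 𝒢 X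
  have hSM : ∑ x ∈ M, d x = 3 * n₃ + 4 * n₄ + 5 * n₅ := by
    rw [hsum M]
    have : ∀ A ∈ 𝒢, (M ∩ A).card = A.card := fun A hA => by
      rw [Finset.inter_eq_right.mpr (h𝒢mem A hA).1]
    rw [Finset.sum_congr rfl this, h𝒢def, Finset.sum_union hdisj345, Finset.sum_union hdisj34]
    rw [Finset.sum_congr rfl (fun A hA => (h3 A hA).2),
        Finset.sum_congr rfl (fun A hA => (h4 A hA).2),
        Finset.sum_congr rfl (fun A hA => (h5 A hA).2)]
    simp [Finset.sum_const, hn₃def, hn₄def, hn₅def, mul_comm]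
  -- main claim
  suffices hH3 : 3 ≤ H.card by
    obtain ⟨t, htH, ht3⟩ := Finset.exists_subset_card_eq hH3
    obtain ⟨x, y, z, hxy, hxz, hyz, ht⟩ := Finset.card_eq_three.mp ht3
    have hx := htH (show x ∈ t by rw [ht]; simp)
    have hy := htH (show y ∈ t by rw [ht]; simp)
    have hz := htH (show z ∈ t by rw [ht]; simp)
    rw [hHdef] at hx hy hz
    simp only [Finset.mem_filter] at hx hy hz
    refine ⟨x, hx.1, y, hy.1, z, hz.1, hxy, hxz, hyz, ?_, ?_, ?_⟩
    · have h2 : m ≤ 2 * d x := hx.2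
      rw [hfilterF x hx.1, hFcard]; omega
    · have h2 : m ≤ 2 * d y := hy.2
      rw [hfilterF y hy.1, hFcard]; omega
    · have h2 : m ≤ 2 * d z := hz.2
      rw [hfilterF z hz.1, hFcard]; omega
  by_contra hlt
  push_neg at hlt
  have hHle : H.card ≤ 2 := by omega
  set L : Finset ℕ := M \ H with hLdef
  clear_value L
  have hHM : H ⊆ M := by rw [hHdef]; exact Finset.filter_subset _ _
  have hLcard : L.card = 6 - H.card := by rw [hLdef, Finset.card_sdiff_of_subset hHM, hMcard]
  have hlight : ∀ x ∈ L, 2 * d x + 1 ≤ m := by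
    intro x hx
    rw [hLdef, Finset.mem_sdiff] at hx
    have : ¬ (m ≤ 2 * d x) := by
      intro hc; exact hx.2 (by rw [hHdef, Finset.mem_filter]; exact ⟨hx.1, hc⟩)
    omega
  have hSLH : ∑ x ∈ L, d x + ∑ x ∈ H, d x = 3 * n₃ + 4 * n₄ + 5 * n₅ := by
    rw [hLdef, Finset.sum_sdiff hHM, hSM]
  have hSLb : 2 * (∑ x ∈ L, d x) + L.card ≤ L.card * m := by
    have h1 : ∑ x ∈ L, (2 * d x + 1) ≤ ∑ _x ∈ L, m := Finset.sum_le_sum hlight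
    rw [Finset.sum_add_distrib, Finset.sum_const, smul_eq_mul, mul_one, ← Finset.mul_sum,
        Finset.sum_const, smul_eq_mul] at h1
    exact h1
  have h012 : H.card = 0 ∨ H.card = 1 ∨ H.card = 2 := by omega
  rcases h012 with h0 | h1 | h2
  · -- no heavy element: contradiction by plain counting
    have hLc : L.card = 6 := by omega
    have hH0 : H = ∅ := Finset.card_eq_zero.mp h0
    have hSH0 : ∑ x ∈ H, d x = 0 := by rw [hH0]; simp
    rw [hLc] at hSLb
    omega
  · -- exactly one heavy element a
    obtain ⟨a, hH1⟩ := Finset.card_eq_one.mp h1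
    have haH : a ∈ H := by rw [hH1]; simp
    have haM : a ∈ M := hHM haH
    have hLc : L.card = 5 := by omega
    have hSH : ∑ x ∈ H, d x = d a := by rw [hH1, Finset.sum_singleton]
    set p₁ := (𝒢₃.filter (fun A => a ∈ A)).card with hp₁def
    clear_value p₁
    have hda : d a ≤ p₁ + n₄ + n₅ := by
      have hda' : d a = ((𝒢₃.filter (fun A => a ∈ A)) ∪ (𝒢₄.filter (fun A => a ∈ A)) ∪
          (𝒢₅.filter (fun A => a ∈ A))).card := by
        rw [hddef]
        show (𝒢.filter (fun A => a ∈ A)).card = _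
        rw [h𝒢def, Finset.filter_union, Finset.filter_union]
      rw [hda']
      calc ((𝒢₃.filter (fun A => a ∈ A)) ∪ (𝒢₄.filter (fun A => a ∈ A)) ∪
          (𝒢₅.filter (fun A => a ∈ A))).card
          ≤ ((𝒢₃.filter (fun A => a ∈ A)) ∪ (𝒢₄.filter (fun A => a ∈ A))).card +
            (𝒢₅.filter (fun A => a ∈ A)).card := Finset.card_union_le _ _
        _ ≤ (𝒢₃.filter (fun A => a ∈ A)).card + (𝒢₄.filter (fun A => a ∈ A)).card +
            (𝒢₅.filter (fun A => a ∈ A)).card := by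
              have := Finset.card_union_le (𝒢₃.filter (fun A => a ∈ A))
                (𝒢₄.filter (fun A => a ∈ A))
              omega
        _ ≤ p₁ + n₄ + n₅ := by
              have h4' := Finset.card_filter_le 𝒢₄ (fun A => a ∈ A)
              have h5' := Finset.card_filter_le 𝒢₅ (fun A => a ∈ A)
              rw [hn₄def, hn₅def]
              omega
    rw [hLc] at hSLb
    rw [hSH] at hSLH
    have hkey : n₃ + n₄ + 3 * n₅ + 5 ≤ 2 * p₁ := by omega
    have hp₁n₃ : p₁ ≤ n₃ := by rw [hn₃def, hp₁def]; exact Finset.card_filter_le _ _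
    have hp₁9 : 9 ≤ p₁ := by omega
    have hpeq : 𝒢₃.filter (fun A => a ∈ A) = 𝒢₃.filter (fun A => ({a} : Finset ℕ) ⊆ A) :=
      Finset.filter_congr (fun A _ => by simp)
    have hpow10 : ((M \ {a}).powersetCard (3 - ({a} : Finset ℕ).card)).card = 10 := by
      rw [Finset.card_powersetCard, Finset.card_sdiff_of_subset (Finset.singleton_subset_iff.mpr haM),
        hMcard, Finset.card_singleton]
      rfl
    have hp₁10 : p₁ ≤ 10 := by
      have := card_filter_superset 𝒢₃ {a} M 3 h3
      rw [hpow10] at this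
      rw [hp₁def, hpeq]
      exact this
    have hmiss : ∀ B1 B2 : Finset ℕ, B1 ≠ B2 → B1 ⊆ M → B1.card = 3 → a ∈ B1 →
        B2 ⊆ M → B2.card = 3 → a ∈ B2 → B1 ∈ 𝒢₃ ∨ B2 ∈ 𝒢₃ := by
      intro B1 B2 hne h1M h1c h1a h2M h2c h2a
      by_contra hc
      push_neg at hc
      obtain ⟨hB1, hB2⟩ := hc
      have hG'mem : ∀ A ∈ insert B1 (insert B2 𝒢₃), A ⊆ M ∧ A.card = 3 := by
        intro A hA
        rcases Finset.mem_insert.mp hA with h | h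
        · subst h; exact ⟨h1M, h1c⟩
        rcases Finset.mem_insert.mp h with h | h
        · subst h; exact ⟨h2M, h2c⟩
        · exact h3 A h
      have h10' := card_filter_superset (insert B1 (insert B2 𝒢₃)) {a} M 3 hG'mem
      rw [hpow10] at h10'
      rw [Finset.filter_insert, if_pos (Finset.singleton_subset_iff.mpr h1a),
        Finset.filter_insert, if_pos (Finset.singleton_subset_iff.mpr h2a)] at h10'
      have hB2f : B2 ∉ 𝒢₃.filter (fun A => ({a} : Finset ℕ) ⊆ A) := by
        intro hc'; exact hB2 (Finset.mem_of_mem_filter _ hc')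
      have hB1f : B1 ∉ insert B2 (𝒢₃.filter (fun A => ({a} : Finset ℕ) ⊆ A)) := by
        intro hc'
        rcases Finset.mem_insert.mp hc' with h | h
        · exact hne h
        · exact hB1 (Finset.mem_of_mem_filter _ h)
      rw [Finset.card_insert_of_notMem hB1f, Finset.card_insert_of_notMem hB2f] at h10'
      rw [hp₁def, hpeq] at hp₁9
      omega
    have h5all : ∀ x ∈ L, M.erase x ∈ 𝒢₅ := by
      intro x hx
      have hx' : x ∈ M ∧ x ∉ H := by rw [hLdef] at hx; exact Finset.mem_sdiff.mp hx
      have hxM : x ∈ M := hx'.1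
      have hxa : x ≠ a := fun h => hx'.2 (h ▸ haH)
      have hL'c : (L.erase x).card = 4 := by rw [Finset.card_erase_of_mem hx, hLc]
      obtain ⟨u1, hu1⟩ : (L.erase x).Nonempty := Finset.card_pos.mp (by omega)
      have hT3 : ((L.erase x).erase u1).card = 3 := by
        rw [Finset.card_erase_of_mem hu1, hL'c]
      obtain ⟨u2, u3, u4, h23, h24, h34, hTeq⟩ := Finset.card_eq_three.mp hT3
      have hu2 : u2 ∈ (L.erase x).erase u1 := by rw [hTeq]; simp
      have hu3 : u3 ∈ (L.erase x).erase u1 := by rw [hTeq]; simp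
      have hu4 : u4 ∈ (L.erase x).erase u1 := by rw [hTeq]; simp
      have h12 : u1 ≠ u2 := fun h => (Finset.mem_erase.mp hu2).1 h.symm
      have h13 : u1 ≠ u3 := fun h => (Finset.mem_erase.mp hu3).1 h.symm
      have h14 : u1 ≠ u4 := fun h => (Finset.mem_erase.mp hu4).1 h.symm
      have hu1L : u1 ∈ L := Finset.mem_of_mem_erase hu1
      have hu2L : u2 ∈ L := Finset.mem_of_mem_erase (Finset.mem_of_mem_erase hu2)
      have hu3L : u3 ∈ L := Finset.mem_of_mem_erase (Finset.mem_of_mem_erase hu3)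
      have hu4L : u4 ∈ L := Finset.mem_of_mem_erase (Finset.mem_of_mem_erase hu4)
      have hLM : L ⊆ M := by rw [hLdef]; exact Finset.sdiff_subset
      have huM : u1 ∈ M ∧ u2 ∈ M ∧ u3 ∈ M ∧ u4 ∈ M :=
        ⟨hLM hu1L, hLM hu2L, hLM hu3L, hLM hu4L⟩
      have hua : a ≠ u1 ∧ a ≠ u2 ∧ a ≠ u3 ∧ a ≠ u4 := by
        refine ⟨?_, ?_, ?_, ?_⟩ <;>
          · intro h
            subst h
            rw [hLdef] at hu1L hu2L hu3L hu4L
            first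
              | exact (Finset.mem_sdiff.mp hu1L).2 haH
              | exact (Finset.mem_sdiff.mp hu2L).2 haH
              | exact (Finset.mem_sdiff.mp hu3L).2 haH
              | exact (Finset.mem_sdiff.mp hu4L).2 haH
      have hux : u1 ≠ x ∧ u2 ≠ x ∧ u3 ≠ x ∧ u4 ≠ x :=
        ⟨(Finset.mem_erase.mp hu1).1,
         (Finset.mem_erase.mp (Finset.mem_of_mem_erase hu2)).1,
         (Finset.mem_erase.mp (Finset.mem_of_mem_erase hu3)).1,
         (Finset.mem_erase.mp (Finset.mem_of_mem_erase hu4)).1⟩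
      -- the four candidate 3-sets
      have hsubC : ∀ u v : ℕ, u ∈ M → v ∈ M → ({a, u, v} : Finset ℕ) ⊆ M := by
        intro u v hu hv
        simp [Finset.insert_subset_iff, haM, hu, hv]
      have hcardC : ∀ u v : ℕ, a ≠ u → a ≠ v → u ≠ v → ({a, u, v} : Finset ℕ).card = 3 :=
        fun u v h1 h2 h3' => Finset.card_eq_three.mpr ⟨a, u, v, h1, h2, h3', rfl⟩
      have haC : ∀ u v : ℕ, a ∈ ({a, u, v} : Finset ℕ) := by intro u v; simp
      have hCne : ∀ u v u' v' : ℕ, u ≠ u' → u ≠ v' → u ≠ a →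
          ({a, u, v} : Finset ℕ) ≠ ({a, u', v'} : Finset ℕ) := by
        intro u v u' v' h1 h2 h3' hc
        have : u ∈ ({a, u', v'} : Finset ℕ) := hc ▸ (by simp)
        simp [h1, h2, h3'] at this
      obtain ⟨P, Q, hP, hQ, hPQ⟩ : ∃ P Q : Finset ℕ, P ∈ 𝒢₃ ∧ Q ∈ 𝒢₃ ∧
          P ∪ Q = insert a (insert u1 {u2, u3, u4}) := by
        have hu12 : ({a, u1, u2} : Finset ℕ) ∪ {a, u3, u4} = insert a (insert u1 {u2, u3, u4}) := by
          ext t; simp; tauto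
        have hu34 : ({a, u1, u3} : Finset ℕ) ∪ {a, u2, u4} = insert a (insert u1 {u2, u3, u4}) := by
          ext t; simp; tauto
        have hne1 : u1 ∉ ({a, u3, u4} : Finset ℕ) := by simp [Ne.symm hua.1, h13, h14]
        have hne2 : u2 ∉ ({a, u3, u4} : Finset ℕ) := by simp [Ne.symm hua.2.1, h23, h24]
        have hne3 : u3 ∉ ({a, u1, u2} : Finset ℕ) := by
          simp [Ne.symm hua.2.2.1, Ne.symm h13, Ne.symm h23]
        have hne4 : u4 ∉ ({a, u1, u2} : Finset ℕ) := by
          simp [Ne.symm hua.2.2.2, Ne.symm h14, Ne.symm h24]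
        have hd1 : ({a, u1, u3} : Finset ℕ) ≠ {a, u3, u4} := by
          intro h; apply hne1; rw [← h]; simp
        have hd2 : ({a, u2, u4} : Finset ℕ) ≠ {a, u3, u4} := by
          intro h; apply hne2; rw [← h]; simp
        have hd3 : ({a, u1, u3} : Finset ℕ) ≠ {a, u1, u2} := by
          intro h; apply hne3; rw [← h]; simp
        have hd4 : ({a, u2, u4} : Finset ℕ) ≠ {a, u1, u2} := by
          intro h; apply hne4; rw [← h]; simp
        have hm13 : ∀ B : Finset ℕ, ({a, u1, u3} : Finset ℕ) ≠ B → B ⊆ M → B.card = 3 →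
            a ∈ B → B ∉ 𝒢₃ → ({a, u1, u3} : Finset ℕ) ∈ 𝒢₃ := by
          intro B hne hBM hBc hBa hB
          exact (hmiss _ B hne (hsubC u1 u3 huM.1 huM.2.2.1)
            (hcardC u1 u3 hua.1 hua.2.2.1 h13) (haC u1 u3) hBM hBc hBa).resolve_right hB
        have hm24 : ∀ B : Finset ℕ, ({a, u2, u4} : Finset ℕ) ≠ B → B ⊆ M → B.card = 3 →
            a ∈ B → B ∉ 𝒢₃ → ({a, u2, u4} : Finset ℕ) ∈ 𝒢₃ := by
          intro B hne hBM hBc hBa hB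
          exact (hmiss _ B hne (hsubC u2 u4 huM.2.1 huM.2.2.2)
            (hcardC u2 u4 hua.2.1 hua.2.2.2 h24) (haC u2 u4) hBM hBc hBa).resolve_right hB
        by_cases hA12 : ({a, u1, u2} : Finset ℕ) ∈ 𝒢₃
        · by_cases hA34 : ({a, u3, u4} : Finset ℕ) ∈ 𝒢₃
          · exact ⟨{a, u1, u2}, {a, u3, u4}, hA12, hA34, hu12⟩
          · exact ⟨{a, u1, u3}, {a, u2, u4},
              hm13 _ hd1 (hsubC u3 u4 huM.2.2.1 huM.2.2.2)
                (hcardC u3 u4 hua.2.2.1 hua.2.2.2 h34) (haC u3 u4) hA34,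
              hm24 _ hd2 (hsubC u3 u4 huM.2.2.1 huM.2.2.2)
                (hcardC u3 u4 hua.2.2.1 hua.2.2.2 h34) (haC u3 u4) hA34, hu34⟩
        · exact ⟨{a, u1, u3}, {a, u2, u4},
            hm13 _ hd3 (hsubC u1 u2 huM.1 huM.2.1)
              (hcardC u1 u2 hua.1 hua.2.1 h12) (haC u1 u2) hA12,
            hm24 _ hd4 (hsubC u1 u2 huM.1 huM.2.1)
              (hcardC u1 u2 hua.1 hua.2.1 h12) (haC u1 u2) hA12, hu34⟩
      -- now the union is a 5-set equal to M.erase x, hence in 𝒢₅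
      have hPF : P ∈ ℱ := h𝒢F P (by rw [h𝒢def]; exact Finset.mem_union_left _ (Finset.mem_union_left _ hP))
      have hQF : Q ∈ ℱ := h𝒢F Q (by rw [h𝒢def]; exact Finset.mem_union_left _ (Finset.mem_union_left _ hQ))
      have hUF : P ∪ Q ∈ ℱ := hUC P hPF Q hQF
      have hKsub : insert a (insert u1 {u2, u3, u4}) ⊆ M.erase x := by
        intro t ht
        simp only [Finset.mem_insert, Finset.mem_singleton] at ht
        rw [Finset.mem_erase]
        rcases ht with h | h | h | h | h
        · subst h; exact ⟨Ne.symm hxa, haM⟩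
        · subst h; exact ⟨hux.1, huM.1⟩
        · subst h; exact ⟨hux.2.1, huM.2.1⟩
        · subst h; exact ⟨hux.2.2.1, huM.2.2.1⟩
        · subst h; exact ⟨hux.2.2.2, huM.2.2.2⟩
      have hc3 : ({u2, u3, u4} : Finset ℕ).card = 3 :=
        Finset.card_eq_three.mpr ⟨u2, u3, u4, h23, h24, h34, rfl⟩
      have hnm1 : u1 ∉ ({u2, u3, u4} : Finset ℕ) := by simp [h12, h13, h14]
      have hnma : a ∉ insert u1 ({u2, u3, u4} : Finset ℕ) := by
        simp [hua.1, hua.2.1, hua.2.2.1, hua.2.2.2]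
      have hKcard : (insert a (insert u1 ({u2, u3, u4} : Finset ℕ))).card = 5 := by
        rw [Finset.card_insert_of_notMem hnma, Finset.card_insert_of_notMem hnm1, hc3]
      have hKeq : insert a (insert u1 {u2, u3, u4}) = M.erase x := by
        apply Finset.eq_of_subset_of_card_le hKsub
        rw [Finset.card_erase_of_mem hxM, hMcard, hKcard]
      rw [← hKeq, ← hPQ]
      exact mem5 _ hUF (by rw [hPQ, hKcard])
    -- all five 5-sets through a are in 𝒢₅, so n₅ ≥ 5
    have hinj : Set.InjOn (fun x => M.erase x) L := by
      intro x hx y hy hxy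
      by_contra hne
      have hyL : y ∈ M := by
        have := hy
        rw [hLdef] at this
        exact (Finset.mem_sdiff.mp this).1
      have hxy' : M.erase x = M.erase y := hxy
      have h1' : y ∈ M.erase x := Finset.mem_erase.mpr ⟨fun h => hne h.symm, hyL⟩
      rw [hxy'] at h1'
      exact (Finset.mem_erase.mp h1').1 rfl
    have himgcard : (L.image (fun x => M.erase x)).card = 5 := by
      rw [Finset.card_image_of_injOn hinj, hLc]
    have himgsub : L.image (fun x => M.erase x) ⊆ 𝒢₅ := by
      intro B hB
      obtain ⟨x, hx, rfl⟩ := Finset.mem_image.mp hB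
      exact h5all x hx
    have hn₅5 : 5 ≤ n₅ := by
      rw [hn₅def]
      calc 5 = (L.image (fun x => M.erase x)).card := himgcard.symm
      _ ≤ 𝒢₅.card := Finset.card_le_card himgsub
    omega
  · -- exactly two heavy elements a, b
    obtain ⟨a, b, hab, hH2⟩ := Finset.card_eq_two.mp h2
    have haH : a ∈ H := by rw [hH2]; simp
    have hbH : b ∈ H := by rw [hH2]; simp
    have haM : a ∈ M := hHM haH
    have hbM : b ∈ M := hHM hbH
    have hLc : L.card = 4 := by omega
    rw [hLc] at hSLb
    have h3F : ∀ A ∈ 𝒢₃, A ∈ ℱ := fun A hA => h𝒢F A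
      (by rw [h𝒢def]; exact Finset.mem_union_left _ (Finset.mem_union_left _ hA))
    have h4F : ∀ A ∈ 𝒢₄, A ∈ ℱ := fun A hA => h𝒢F A
      (by rw [h𝒢def]; exact Finset.mem_union_left _ (Finset.mem_union_right _ hA))
    have hpt : ∀ A ∈ 𝒢, (H ∩ A).card ≤ 1 + (if H ⊆ A then 1 else 0) := by
      intro A _
      by_cases hHA : H ⊆ A
      · rw [if_pos hHA, Finset.inter_eq_left.mpr hHA]
        omega
      · rw [if_neg hHA]
        have hss : H ∩ A ⊂ H := by
          refine Finset.ssubset_iff_subset_ne.mpr ⟨Finset.inter_subset_left, ?_⟩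
          intro h
          exact hHA (Finset.inter_eq_left.mp h)
        have := Finset.card_lt_card hss
        omega
    have hSHb : ∑ x ∈ H, d x ≤ m + (𝒢.filter (fun A => H ⊆ A)).card := by
      rw [hsum H]
      calc ∑ A ∈ 𝒢, (H ∩ A).card
          ≤ ∑ A ∈ 𝒢, (1 + if H ⊆ A then 1 else 0) := Finset.sum_le_sum hpt
        _ = 𝒢.card + ∑ A ∈ 𝒢, (if H ⊆ A then 1 else 0) := by
            rw [Finset.sum_add_distrib, Finset.sum_const, smul_eq_mul, mul_one]
        _ = m + (𝒢.filter (fun A => H ⊆ A)).card := by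
            rw [h𝒢card, Finset.card_filter]
    have hPdec : (𝒢.filter (fun A => H ⊆ A)).card =
        (𝒢₃.filter (fun A => H ⊆ A)).card + (𝒢₄.filter (fun A => H ⊆ A)).card +
        (𝒢₅.filter (fun A => H ⊆ A)).card := by
      rw [h𝒢def, Finset.filter_union, Finset.filter_union,
        Finset.card_union_of_disjoint (by
          refine Finset.disjoint_left.mpr fun A hA hB => ?_
          have hA' : A ∈ 𝒢₃ ∪ 𝒢₄ := by
            rcases Finset.mem_union.mp hA with h | h
            · exact Finset.mem_union_left _ (Finset.mem_of_mem_filter _ h)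
            · exact Finset.mem_union_right _ (Finset.mem_of_mem_filter _ h)
          exact Finset.disjoint_left.mp hdisj345 hA' (Finset.mem_of_mem_filter _ hB)),
        Finset.card_union_of_disjoint (by
          refine Finset.disjoint_left.mpr fun A hA hB => ?_
          exact Finset.disjoint_left.mp hdisj34 (Finset.mem_of_mem_filter _ hA)
            (Finset.mem_of_mem_filter _ hB))]
    have hr4 : (𝒢₄.filter (fun A => H ⊆ A)).card ≤ n₄ := by
      rw [hn₄def]; exact Finset.card_filter_le _ _
    have hr5 : (𝒢₅.filter (fun A => H ⊆ A)).card ≤ n₅ := by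
      rw [hn₅def]; exact Finset.card_filter_le _ _
    have hp4 : (𝒢₃.filter (fun A => H ⊆ A)).card ≤ 4 := by
      have h := card_filter_superset 𝒢₃ H M 3 h3
      rw [Finset.card_powersetCard, ← hLdef, hLc, h2] at h
      exact h
    have hp3 : 3 ≤ (𝒢₃.filter (fun A => H ⊆ A)).card ∧
        n₅ + 2 ≤ (𝒢₃.filter (fun A => H ⊆ A)).card := by omega
    -- extract three 3-sets containing H
    obtain ⟨t, htT, ht3⟩ := Finset.exists_subset_card_eq hp3.1
    obtain ⟨A1, A2, A3, hA12, hA13, hA23, hteq⟩ := Finset.card_eq_three.mp ht3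
    have hA1T : A1 ∈ 𝒢₃.filter (fun A => H ⊆ A) := htT (by rw [hteq]; simp)
    have hA2T : A2 ∈ 𝒢₃.filter (fun A => H ⊆ A) := htT (by rw [hteq]; simp)
    have hA3T : A3 ∈ 𝒢₃.filter (fun A => H ⊆ A) := htT (by rw [hteq]; simp)
    have hA1G : A1 ∈ 𝒢₃ := Finset.mem_of_mem_filter _ hA1T
    have hA2G : A2 ∈ 𝒢₃ := Finset.mem_of_mem_filter _ hA2T
    have hA3G : A3 ∈ 𝒢₃ := Finset.mem_of_mem_filter _ hA3T
    have hHA1 : H ⊆ A1 := (Finset.mem_filter.mp hA1T).2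
    have hHA2 : H ⊆ A2 := (Finset.mem_filter.mp hA2T).2
    have hHA3 : H ⊆ A3 := (Finset.mem_filter.mp hA3T).2
    have extract : ∀ A : Finset ℕ, A ∈ 𝒢₃ → H ⊆ A →
        ∃ u : ℕ, A = insert u H ∧ u ∉ H ∧ u ∈ L := by
      intro A hAG hHA
      have hsdc : (A \ H).card = 1 := by
        rw [Finset.card_sdiff_of_subset hHA, (h3 _ hAG).2, h2]
      obtain ⟨u, hu⟩ := Finset.card_eq_one.mp hsdc
      have huA : u ∈ A \ H := by rw [hu]; simp
      have huH : u ∉ H := (Finset.mem_sdiff.mp huA).2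
      have huM : u ∈ M := (h3 _ hAG).1 (Finset.mem_sdiff.mp huA).1
      refine ⟨u, ?_, huH, by rw [hLdef]; exact Finset.mem_sdiff.mpr ⟨huM, huH⟩⟩
      rw [← Finset.sdiff_union_of_subset hHA, hu, Finset.insert_eq]
    obtain ⟨u1, hA1eq, hu1H, hu1L⟩ := extract A1 hA1G hHA1
    obtain ⟨u2, hA2eq, hu2H, hu2L⟩ := extract A2 hA2G hHA2
    obtain ⟨u3, hA3eq, hu3H, hu3L⟩ := extract A3 hA3G hHA3
    have hu12 : u1 ≠ u2 := fun h => hA12 (by rw [hA1eq, hA2eq, h])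
    have hu13 : u1 ≠ u3 := fun h => hA13 (by rw [hA1eq, hA3eq, h])
    have hu23 : u2 ≠ u3 := fun h => hA23 (by rw [hA2eq, hA3eq, h])
    -- the union of A1 A2 A3 is a 5-set S ∈ 𝒢₅
    have hA1F : A1 ∈ ℱ := h3F _ hA1G
    have hA2F : A2 ∈ ℱ := h3F _ hA2G
    have hA3F : A3 ∈ ℱ := h3F _ hA3G
    have hunion2 : ∀ (u v : ℕ), insert u H ∪ insert v H = insert u (insert v H) := by
      intro u v; ext s; simp [Finset.mem_union, Finset.mem_insert]; tauto
    have hunion3 : ∀ (u v t' : ℕ),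
        insert u (insert v H) ∪ insert t' H = insert u (insert v (insert t' H)) := by
      intro u v t'; ext s; simp [Finset.mem_union, Finset.mem_insert]; tauto
    have hcard4 : ∀ u v : ℕ, u ≠ v → u ∉ H → v ∉ H →
        (insert u (insert v H)).card = 4 := by
      intro u v huv huH hvH
      rw [Finset.card_insert_of_notMem (by simp [huv, huH]),
        Finset.card_insert_of_notMem hvH, h2]
    have hcard5 : ∀ u v t' : ℕ, u ≠ v → u ≠ t' → v ≠ t' → u ∉ H → v ∉ H → t' ∉ H →
        (insert u (insert v (insert t' H))).card = 5 := by
      intro u v t' h1' h2' h3' hu hv ht'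
      rw [Finset.card_insert_of_notMem (by simp [h1', h2', hu]),
        Finset.card_insert_of_notMem (by simp [h3', hv]),
        Finset.card_insert_of_notMem ht', h2]
    have hS5 : ∀ (B1 B2 B3 : Finset ℕ) (v1 v2 v3 : ℕ), B1 ∈ 𝒢₃ → B2 ∈ 𝒢₃ → B3 ∈ 𝒢₃ →
        B1 = insert v1 H → B2 = insert v2 H → B3 = insert v3 H →
        v1 ∉ H → v2 ∉ H → v3 ∉ H → v1 ≠ v2 → v1 ≠ v3 → v2 ≠ v3 →
        insert v1 (insert v2 (insert v3 H)) ∈ 𝒢₅ := by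
      intro B1 B2 B3 v1 v2 v3 hB1 hB2 hB3 he1 he2 he3 hv1 hv2 hv3 h12' h13' h23'
      have hBF : B1 ∪ B2 ∪ B3 ∈ ℱ := hUC _ (hUC _ (h3F _ hB1) _ (h3F _ hB2)) _ (h3F _ hB3)
      have hshape : B1 ∪ B2 ∪ B3 = insert v1 (insert v2 (insert v3 H)) := by
        rw [he1, he2, he3, hunion2, hunion3]
      rw [hshape] at hBF
      exact mem5 _ hBF (hcard5 v1 v2 v3 h12' h13' h23' hv1 hv2 hv3)
    have hSG5 : insert u1 (insert u2 (insert u3 H)) ∈ 𝒢₅ :=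
      hS5 A1 A2 A3 u1 u2 u3 hA1G hA2G hA3G hA1eq hA2eq hA3eq hu1H hu2H hu3H hu12 hu13 hu23
    -- rule out p = 4
    have hpne4 : (𝒢₃.filter (fun A => H ⊆ A)).card ≠ 4 := by
      intro hp4'
      have hsd1 : ((𝒢₃.filter (fun A => H ⊆ A)) \ t).card = 1 := by
        rw [Finset.card_sdiff_of_subset htT, hp4', ht3]
      obtain ⟨A4, hA4⟩ := Finset.card_eq_one.mp hsd1
      have hA4mem : A4 ∈ (𝒢₃.filter (fun A => H ⊆ A)) \ t := by rw [hA4]; simp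
      have hA4T : A4 ∈ 𝒢₃.filter (fun A => H ⊆ A) := (Finset.mem_sdiff.mp hA4mem).1
      have hA4t : A4 ∉ t := (Finset.mem_sdiff.mp hA4mem).2
      have hA4G : A4 ∈ 𝒢₃ := Finset.mem_of_mem_filter _ hA4T
      have hHA4 : H ⊆ A4 := (Finset.mem_filter.mp hA4T).2
      obtain ⟨u4, hA4eq, hu4H, hu4L⟩ := extract A4 hA4G hHA4
      have hA14 : A1 ≠ A4 := fun h => hA4t (by rw [← h, hteq]; simp)
      have hA24 : A2 ≠ A4 := fun h => hA4t (by rw [← h, hteq]; simp)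
      have hA34 : A3 ≠ A4 := fun h => hA4t (by rw [← h, hteq]; simp)
      have hu14 : u1 ≠ u4 := fun h => hA14 (by rw [hA1eq, hA4eq, h])
      have hu24 : u2 ≠ u4 := fun h => hA24 (by rw [hA2eq, hA4eq, h])
      have hu34 : u3 ≠ u4 := fun h => hA34 (by rw [hA3eq, hA4eq, h])
      have hS124 : insert u1 (insert u2 (insert u4 H)) ∈ 𝒢₅ :=
        hS5 A1 A2 A4 u1 u2 u4 hA1G hA2G hA4G hA1eq hA2eq hA4eq hu1H hu2H hu4H hu12 hu14 hu24
      have hS134 : insert u1 (insert u3 (insert u4 H)) ∈ 𝒢₅ :=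
        hS5 A1 A3 A4 u1 u3 u4 hA1G hA3G hA4G hA1eq hA3eq hA4eq hu1H hu3H hu4H hu13 hu14 hu34
      have hS234 : insert u2 (insert u3 (insert u4 H)) ∈ 𝒢₅ :=
        hS5 A2 A3 A4 u2 u3 u4 hA2G hA3G hA4G hA2eq hA3eq hA4eq hu2H hu3H hu4H hu23 hu24 hu34
      -- four distinct 5-sets
      have hmem_u4 : u4 ∉ insert u1 (insert u2 (insert u3 H)) := by
        simp [Ne.symm hu14, Ne.symm hu24, Ne.symm hu34, hu4H]
      have hmem_u3 : u3 ∉ insert u1 (insert u2 (insert u4 H)) := by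
        simp [Ne.symm hu13, Ne.symm hu23, hu34, hu3H]
      have hmem_u2 : u2 ∉ insert u1 (insert u3 (insert u4 H)) := by
        simp [Ne.symm hu12, hu23, hu24, hu2H]
      have hmem_u1 : u1 ∉ insert u2 (insert u3 (insert u4 H)) := by
        simp [hu12, hu13, hu14, hu1H]
      have hin : ∀ v w1 w2 w3 : ℕ, v ∈ insert v (insert w1 (insert w2 H)) := by
        intro v w1 w2 w3; simp
      have hd12 : insert u1 (insert u2 (insert u3 H)) ≠ insert u1 (insert u2 (insert u4 H)) := by
        intro h; apply hmem_u3; rw [← h]; simp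
      have hd13 : insert u1 (insert u2 (insert u3 H)) ≠ insert u1 (insert u3 (insert u4 H)) := by
        intro h; apply hmem_u2; rw [← h]; simp
      have hd14 : insert u1 (insert u2 (insert u3 H)) ≠ insert u2 (insert u3 (insert u4 H)) := by
        intro h; apply hmem_u1; rw [← h]; simp
      have hd23 : insert u1 (insert u2 (insert u4 H)) ≠ insert u1 (insert u3 (insert u4 H)) := by
        intro h; apply hmem_u2; rw [← h]; simp
      have hd24 : insert u1 (insert u2 (insert u4 H)) ≠ insert u2 (insert u3 (insert u4 H)) := by
        intro h; apply hmem_u1; rw [← h]; simp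
      have hd34 : insert u1 (insert u3 (insert u4 H)) ≠ insert u2 (insert u3 (insert u4 H)) := by
        intro h; apply hmem_u1; rw [← h]; simp
      have hsub5 : ({insert u1 (insert u2 (insert u3 H)), insert u1 (insert u2 (insert u4 H)),
          insert u1 (insert u3 (insert u4 H)), insert u2 (insert u3 (insert u4 H))} :
          Finset (Finset ℕ)) ⊆ 𝒢₅ := by
        intro B hB
        simp only [Finset.mem_insert, Finset.mem_singleton] at hB
        rcases hB with h | h | h | h <;> subst h
        · exact hSG5
        · exact hS124
        · exact hS134
        · exact hS234
      have hcard5' : ({insert u1 (insert u2 (insert u3 H)), insert u1 (insert u2 (insert u4 H)),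
          insert u1 (insert u3 (insert u4 H)), insert u2 (insert u3 (insert u4 H))} :
          Finset (Finset ℕ)).card = 4 := by
        rw [Finset.card_insert_of_notMem (by simp [hd12, hd13, hd14]),
          Finset.card_insert_of_notMem (by simp [hd23, hd24]),
          Finset.card_insert_of_notMem (by simp [hd34]), Finset.card_singleton]
      have h45 : 4 ≤ n₅ := by
        rw [hn₅def, ← hcard5']
        exact Finset.card_le_card hsub5
      omega
    -- so p = 3
    have hp3' : (𝒢₃.filter (fun A => H ⊆ A)).card = 3 := by omega
    have hn₅1 : n₅ = 1 := by omega
    have hr4' : n₄ ≤ (𝒢₄.filter (fun A => H ⊆ A)).card := by omega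
    have h4H : ∀ A ∈ 𝒢₄, H ⊆ A := by
      have he : 𝒢₄.filter (fun A => H ⊆ A) = 𝒢₄ :=
        Finset.eq_of_subset_of_card_le (Finset.filter_subset _ _) (by rw [← hn₄def]; exact hr4')
      intro A hA
      rw [← he] at hA
      exact (Finset.mem_filter.mp hA).2
    have hG5S : 𝒢₅ = {insert u1 (insert u2 (insert u3 H))} := by
      have h1' : 𝒢₅.card = 1 := by rw [← hn₅def]; exact hn₅1
      obtain ⟨S', hS'⟩ := Finset.card_eq_one.mp h1'
      rw [hS'] at hSG5 ⊢
      rw [Finset.mem_singleton] at hSG5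
      rw [hSG5]
    have hTeq : 𝒢₃.filter (fun A => H ⊆ A) = {A1, A2, A3} := by
      rw [← hteq]
      exact (Finset.eq_of_subset_of_card_le htT (by rw [hp3', ht3])).symm
    -- the fourth light element w
    have hU3L : ({u1, u2, u3} : Finset ℕ) ⊆ L := by
      intro s hs
      simp only [Finset.mem_insert, Finset.mem_singleton] at hs
      rcases hs with h | h | h <;> subst h
      · exact hu1L
      · exact hu2L
      · exact hu3L
    have hU3c : ({u1, u2, u3} : Finset ℕ).card = 3 :=
      Finset.card_eq_three.mpr ⟨u1, u2, u3, hu12, hu13, hu23, rfl⟩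
    have hwc : (L \ ({u1, u2, u3} : Finset ℕ)).card = 1 := by
      rw [Finset.card_sdiff_of_subset hU3L, hU3c, hLc]
    obtain ⟨w, hw⟩ := Finset.card_eq_one.mp hwc
    have hwmem : w ∈ L \ ({u1, u2, u3} : Finset ℕ) := by rw [hw]; simp
    have hwL : w ∈ L := (Finset.mem_sdiff.mp hwmem).1
    have hwU3 : w ∉ ({u1, u2, u3} : Finset ℕ) := (Finset.mem_sdiff.mp hwmem).2
    have hwu1 : w ≠ u1 := by intro h; apply hwU3; rw [h]; simp
    have hwu2 : w ≠ u2 := by intro h; apply hwU3; rw [h]; simp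
    have hwu3 : w ≠ u3 := by intro h; apply hwU3; rw [h]; simp
    have hwMH : w ∈ M ∧ w ∉ H := by rw [hLdef] at hwL; exact Finset.mem_sdiff.mp hwL
    have hwH : w ∉ H := hwMH.2
    have hLform : L = insert u1 (insert u2 (insert u3 {w})) := by
      symm
      apply Finset.eq_of_subset_of_card_le
      · intro s hs
        simp only [Finset.mem_insert, Finset.mem_singleton] at hs
        rcases hs with h | h | h | h <;> subst h
        · exact hu1L
        · exact hu2L
        · exact hu3L
        · exact hwL
      · rw [hLc, Finset.card_insert_of_notMem (by simp [hu12, hu13, Ne.symm hwu1]),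
          Finset.card_insert_of_notMem (by simp [hu23, Ne.symm hwu2]),
          Finset.card_insert_of_notMem (by simp [Ne.symm hwu3]), Finset.card_singleton]
    have hwS : w ∉ insert u1 (insert u2 (insert u3 H)) := by
      simp [hwu1, hwu2, hwu3, hwH]
    -- w belongs to no 4-set
    have hw4 : ∀ A ∈ 𝒢₄, w ∉ A := by
      intro A hA hwA
      have hHA : H ⊆ A := h4H A hA
      have hiwH : insert w H ⊆ A := Finset.insert_subset hwA hHA
      have hiwHc : (insert w H).card = 3 := by
        rw [Finset.card_insert_of_notMem hwH, h2]
      have hvc : (A \ insert w H).card = 1 := by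
        rw [Finset.card_sdiff_of_subset hiwH, (h4 _ hA).2, hiwHc]
      obtain ⟨v, hv⟩ := Finset.card_eq_one.mp hvc
      have hvmem : v ∈ A \ insert w H := by rw [hv]; simp
      have hvA : v ∈ A := (Finset.mem_sdiff.mp hvmem).1
      have hviwH : v ∉ insert w H := (Finset.mem_sdiff.mp hvmem).2
      have hvw : v ≠ w := by intro h; apply hviwH; rw [h]; simp
      have hvH : v ∉ H := by intro h; exact hviwH (Finset.mem_insert_of_mem h)
      have hvM : v ∈ M := (h4 _ hA).1 hvA
      have hvL : v ∈ L := by rw [hLdef]; exact Finset.mem_sdiff.mpr ⟨hvM, hvH⟩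
      have hAeqv : A = insert v (insert w H) := by
        have h' := Finset.sdiff_union_of_subset hiwH
        rw [hv] at h'
        rw [← h']
        ext s
        simp only [Finset.mem_union, Finset.mem_insert, Finset.mem_singleton]
      have hvcase : v = u1 ∨ v = u2 ∨ v = u3 := by
        rw [hLform] at hvL
        simp only [Finset.mem_insert, Finset.mem_singleton] at hvL
        rcases hvL with h | h | h | h
        · exact Or.inl h
        · exact Or.inr (Or.inl h)
        · exact Or.inr (Or.inr h)
        · exact absurd h hvw
      -- pick uj ≠ v, uj ∉ A, and form the 5-set A ∪ Aj
      have key : ∀ (Bj : Finset ℕ) (uj : ℕ), Bj ∈ 𝒢₃ → Bj = insert uj H → uj ∉ A → False := by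
        intro Bj uj hBjG hBjeq hujA
        have hXF : A ∪ Bj ∈ ℱ := hUC _ (h4F _ hA) _ (h3F _ hBjG)
        have hXeq : A ∪ Bj = insert uj A := by
          rw [hBjeq]
          ext s
          simp only [Finset.mem_union, Finset.mem_insert]
          constructor
          · rintro (h | h | h)
            · exact Or.inr h
            · exact Or.inl h
            · exact Or.inr (hHA h)
          · rintro (h | h)
            · exact Or.inr (Or.inl h)
            · exact Or.inl h
        have hXcard : (A ∪ Bj).card = 5 := by
          rw [hXeq, Finset.card_insert_of_notMem hujA, (h4 _ hA).2]
        have hXG5 : A ∪ Bj ∈ 𝒢₅ := mem5 _ hXF hXcard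
        rw [hG5S, Finset.mem_singleton] at hXG5
        apply hwS
        rw [← hXG5]
        exact Finset.mem_union_left _ hwA
      rcases hvcase with hveq | hveq | hveq
      · -- v = u1, use A2 (u2 ∉ A)
        refine key A2 u2 hA2G hA2eq ?_
        rw [hAeqv, hveq]
        simp [Ne.symm hu12, Ne.symm hwu2, hu2H]
      · refine key A1 u1 hA1G hA1eq ?_
        rw [hAeqv, hveq]
        simp [hu12, Ne.symm hwu1, hu1H]
      · refine key A1 u1 hA1G hA1eq ?_
        rw [hAeqv, hveq]
        simp [hu13, Ne.symm hwu1, hu1H]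
    -- w belongs to no 3-set
    have hw3 : ∀ A ∈ 𝒢₃, w ∉ A := by
      intro A hA hwA
      by_cases hHA : H ⊆ A
      · have hAT : A ∈ 𝒢₃.filter (fun A => H ⊆ A) := Finset.mem_filter.mpr ⟨hA, hHA⟩
        rw [hTeq] at hAT
        simp only [Finset.mem_insert, Finset.mem_singleton] at hAT
        rcases hAT with h | h | h <;> subst h
        · rw [hA1eq] at hwA
          rcases Finset.mem_insert.mp hwA with h' | h'
          · exact hwu1 h'
          · exact hwH h'
        · rw [hA2eq] at hwA
          rcases Finset.mem_insert.mp hwA with h' | h'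
          · exact hwu2 h'
          · exact hwH h'
        · rw [hA3eq] at hwA
          rcases Finset.mem_insert.mp hwA with h' | h'
          · exact hwu3 h'
          · exact hwH h'
      · -- A has a second light element v
        have hintc : (A ∩ H).card ≤ 1 := by
          have hss : A ∩ H ⊂ H := by
            refine Finset.ssubset_iff_subset_ne.mpr ⟨Finset.inter_subset_right, ?_⟩
            intro h
            exact hHA (Finset.inter_eq_right.mp h)
          have := Finset.card_lt_card hss
          omega
        have hsdc2 : 2 ≤ (A \ H).card := by
          have := Finset.card_inter_add_card_sdiff A H
          have hc3' := (h3 _ hA).2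
          omega
        have hwAH : w ∈ A \ H := Finset.mem_sdiff.mpr ⟨hwA, hwH⟩
        have hvne : ((A \ H).erase w).Nonempty := by
          apply Finset.card_pos.mp
          rw [Finset.card_erase_of_mem hwAH]
          omega
        obtain ⟨v, hv⟩ := hvne
        have hvw : v ≠ w := (Finset.mem_erase.mp hv).1
        have hvAH : v ∈ A \ H := (Finset.mem_erase.mp hv).2
        have hvA : v ∈ A := (Finset.mem_sdiff.mp hvAH).1
        have hvH : v ∉ H := (Finset.mem_sdiff.mp hvAH).2
        have hvM : v ∈ M := (h3 _ hA).1 hvA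
        have hvL : v ∈ L := by rw [hLdef]; exact Finset.mem_sdiff.mpr ⟨hvM, hvH⟩
        have hvcase : v = u1 ∨ v = u2 ∨ v = u3 := by
          rw [hLform] at hvL
          simp only [Finset.mem_insert, Finset.mem_singleton] at hvL
          rcases hvL with h | h | h | h
          · exact Or.inl h
          · exact Or.inr (Or.inl h)
          · exact Or.inr (Or.inr h)
          · exact absurd h hvw
        -- A ∪ (insert v H) = A ∪ H has card 4 or 5 and contains w : contradiction
        have key : ∀ (Bj : Finset ℕ) (uj : ℕ), Bj ∈ 𝒢₃ → Bj = insert uj H → uj = v → False := by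
          intro Bj uj hBjG hBjeq hujv
          have hXF : A ∪ Bj ∈ ℱ := hUC _ (h3F _ hA) _ (h3F _ hBjG)
          have hXeq : A ∪ Bj = A ∪ H := by
            rw [hBjeq, hujv]
            ext s
            simp only [Finset.mem_union, Finset.mem_insert]
            constructor
            · rintro (h | h | h)
              · exact Or.inl h
              · exact Or.inl (h ▸ hvA)
              · exact Or.inr h
            · rintro (h | h)
              · exact Or.inl h
              · exact Or.inr (Or.inr h)
          have hHAne : (H \ A).Nonempty := by
            rw [Finset.sdiff_nonempty]
            exact hHA
          have hHAc : 1 ≤ (H \ A).card ∧ (H \ A).card ≤ 2 := by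
            constructor
            · exact Finset.card_pos.mpr hHAne
            · have := Finset.card_le_card (Finset.sdiff_subset : H \ A ⊆ H)
              omega
          have hXcard : (A ∪ H).card = 4 ∨ (A ∪ H).card = 5 := by
            have h' := Finset.card_sdiff_add_card H A
            have hc3' := (h3 _ hA).2
            rw [Finset.union_comm] at h'
            omega
          have hwX : w ∈ A ∪ Bj := Finset.mem_union_left _ hwA
          rcases hXcard with hc | hc
          · have hXG4 : A ∪ Bj ∈ 𝒢₄ := mem4 _ hXF (by rw [hXeq]; exact hc)
            exact hw4 _ hXG4 hwX
          · have hXG5 : A ∪ Bj ∈ 𝒢₅ := mem5 _ hXF (by rw [hXeq]; exact hc)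
            rw [hG5S, Finset.mem_singleton] at hXG5
            apply hwS
            rw [← hXG5]
            exact hwX
        rcases hvcase with hveq | hveq | hveq
        · exact key A1 u1 hA1G hA1eq hveq.symm
        · exact key A2 u2 hA2G hA2eq hveq.symm
        · exact key A3 u3 hA3G hA3eq hveq.symm
    have hw5 : ∀ A ∈ 𝒢₅, w ∉ A := by
      intro A hA
      rw [hG5S, Finset.mem_singleton] at hA
      rw [hA]
      exact hwS
    have hdw : d w = 0 := by
      rw [hddef]
      simp only
      rw [Finset.card_eq_zero, Finset.filter_eq_empty_iff]
      intro A hA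
      rw [h𝒢def] at hA
      rcases Finset.mem_union.mp hA with h | h
      · rcases Finset.mem_union.mp h with h' | h'
        · exact hw3 A h'
        · exact hw4 A h'
      · exact hw5 A h
    have hLsum : ∑ x ∈ L, d x = d u1 + (d u2 + (d u3 + d w)) := by
      rw [hLform, Finset.sum_insert (by simp [hu12, hu13, Ne.symm hwu1]),
        Finset.sum_insert (by simp [hu23, Ne.symm hwu2]),
        Finset.sum_insert (by simp [Ne.symm hwu3]), Finset.sum_singleton]
    have hl1 := hlight u1 hu1L
    have hl2 := hlight u2 hu2L
    have hl3 := hlight u3 hu3L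
    omega
end

section
/- Let M₆ = {1,2,3,4,5,6} and let ℱ be a union-closed family of subsets of M₆ with ∅ ∈ ℱ, ⋃_{A ∈ ℱ} A = M₆, and T(ℱ) = 3, i.e. the smallest cardinality of a nonempty member of ℱ is 3. Then there exist at least 3 distinct elements of M₆ each of which belongs to at least half of the sets in ℱ. -/
/-- Double counting: summing over elements the number of sets missing them
equals summing over sets the number of elements they miss. -/
lemma dcount (ℱ : Finset (Finset ℕ)) (G : Finset ℕ) :
    ∑ x ∈ G, (ℱ.filter (fun A => x ∉ A)).card
      = ∑ A ∈ ℱ, (G.filter (fun x => x ∉ A)).card := by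
  simp only [Finset.card_filter]
  exact Finset.sum_comm

set_option maxHeartbeats 2000000 in
/-- The main contradiction: there cannot be four "heavy" elements. -/
lemma main_contra (ℱ : Finset (Finset ℕ)) (M H : Finset ℕ)
    (hMcard : M.card = 6)
    (hsub : ∀ A ∈ ℱ, A ⊆ M)
    (hUC : ∀ A ∈ ℱ, ∀ B ∈ ℱ, A ∪ B ∈ ℱ)
    (hempty : ∅ ∈ ℱ)
    (hMmem : M ∈ ℱ)
    (hmin : ∀ A ∈ ℱ, A ≠ ∅ → 3 ≤ A.card)
    (hHM : H ⊆ M) (hH4 : H.card = 4)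
    (hheavy : ∀ x ∈ H, ℱ.card + 1 ≤ 2 * (ℱ.filter (fun A => x ∉ A)).card) :
    False := by
  classical
  set n := ℱ.card with hn
  set W := M \ H with hWdef
  have hW2 : W.card = 2 := by
    rw [hWdef, Finset.card_sdiff_of_subset hHM, hMcard, hH4]
  have hHnotW : ∀ x ∈ H, x ∉ W := by
    intro x hx hxW
    rw [hWdef, Finset.mem_sdiff] at hxW
    exact hxW.2 hx
  -- basic cardinality fact: nonempty members meet H
  have F2 : ∀ A ∈ ℱ, A ≠ ∅ → (H \ A).card ≤ 3 := by
    intro A hA hAne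
    have h1 : (H \ A).card + (H ∩ A).card = H.card := Finset.card_sdiff_add_card_inter H A
    have h2 : (A ∩ H).card + (A \ H).card = A.card := Finset.card_inter_add_card_sdiff A H
    have h3 : (A \ H).card ≤ 2 := by
      have hsb : A \ H ⊆ W := by
        rw [hWdef]
        exact Finset.sdiff_subset_sdiff (hsub A hA) (Finset.Subset.refl H)
      calc (A \ H).card ≤ W.card := Finset.card_le_card hsb
        _ = 2 := hW2
    have h4 : 3 ≤ A.card := hmin A hA hAne
    have h5 : (A ∩ H).card = (H ∩ A).card := by rw [Finset.inter_comm]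
    omega
  -- sets whose trace misses 3 elements of H have the special form `insert h W`
  have F3 : ∀ A ∈ ℱ, (H \ A).card = 3 → ∃ h ∈ H, A = insert h W := by
    intro A hA h3
    have hAne : A ≠ ∅ := by
      intro h
      rw [h, Finset.sdiff_empty, hH4] at h3
      omega
    have h1 : (H \ A).card + (H ∩ A).card = H.card := Finset.card_sdiff_add_card_inter H A
    rw [hH4] at h1
    have h2 : (H ∩ A).card = 1 := by omega
    obtain ⟨h, hh⟩ := Finset.card_eq_one.mp h2
    have hhHA : h ∈ H ∩ A := by rw [hh]; exact Finset.mem_singleton_self h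
    refine ⟨h, (Finset.mem_inter.mp hhHA).1, ?_⟩
    have hAW : A \ H = W := by
      apply Finset.eq_of_subset_of_card_le
      · rw [hWdef]; exact Finset.sdiff_subset_sdiff (hsub A hA) (Finset.Subset.refl H)
      · have h5 : (A ∩ H).card + (A \ H).card = A.card := Finset.card_inter_add_card_sdiff A H
        have h6 : (A ∩ H).card = (H ∩ A).card := by rw [Finset.inter_comm]
        have h7 : 3 ≤ A.card := hmin A hA hAne
        omega
    ext x
    simp only [Finset.mem_insert]
    constructor
    · intro hxA
      by_cases hxH : x ∈ H
      · left
        have : x ∈ H ∩ A := Finset.mem_inter.mpr ⟨hxH, hxA⟩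
        rw [hh] at this
        exact Finset.mem_singleton.mp this
      · right
        rw [← hAW]
        exact Finset.mem_sdiff.mpr ⟨hxA, hxH⟩
    · intro hx
      rcases hx with rfl | hxW
      · exact (Finset.mem_inter.mp hhHA).2
      · rw [← hAW] at hxW
        exact (Finset.mem_sdiff.mp hxW).1
  -- the set K of elements h of H with {h} ∪ W in the family
  set K := H.filter (fun h => insert h W ∈ ℱ) with hKdef
  have hKH : K ⊆ H := Finset.filter_subset _ _
  -- trace computations for the special sets
  have htraceW : ∀ X : Finset ℕ, H \ (X ∪ W) = H \ X := by
    intro X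
    ext x
    simp only [Finset.mem_sdiff, Finset.mem_union]
    constructor
    · intro ⟨hxH, hx⟩; exact ⟨hxH, fun h => hx (Or.inl h)⟩
    · intro ⟨hxH, hx⟩
      exact ⟨hxH, fun h => by
        rcases h with h | h
        · exact hx h
        · exact hHnotW x hxH h⟩
  have htraceAh : ∀ h ∈ H, H \ insert h W = H.erase h := by
    intro h hh
    ext x
    simp only [Finset.mem_sdiff, Finset.mem_insert, Finset.mem_erase]
    constructor
    · intro ⟨hxH, hx⟩
      exact ⟨fun he => hx (Or.inl he), hxH⟩
    · intro ⟨hxh, hxH⟩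
      refine ⟨hxH, fun hc => ?_⟩
      rcases hc with rfl | hc
      · exact hxh rfl
      · exact hHnotW x hxH hc
  -- cardinalities n₀, n₁, n₃ of trace classes
  set N0 := (ℱ.filter (fun A => (H \ A).card = 0)).card with hN0
  set N1 := (ℱ.filter (fun A => (H \ A).card = 1)).card with hN1
  set N3 := (ℱ.filter (fun A => (H \ A).card = 3)).card with hN3
  -- the global counting inequality
  have hKey : 2 * N0 + N1 ≤ N3 := by
    -- lower bound on the trace sum from heaviness
    have hdsum : ∑ x ∈ H, (ℱ.filter (fun A => x ∉ A)).card
        = ∑ A ∈ ℱ, (H \ A).card := by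
      rw [dcount]
      apply Finset.sum_congr rfl
      intro A _
      congr 1
      rw [Finset.sdiff_eq_filter]
    have hlow : 2 * n + 2 ≤ ∑ A ∈ ℱ, (H \ A).card := by
      have h1 : ∑ x ∈ H, (n + 1) ≤ ∑ x ∈ H, 2 * (ℱ.filter (fun A => x ∉ A)).card :=
        Finset.sum_le_sum (fun x hx => hheavy x hx)
      rw [Finset.sum_const, hH4, ← Finset.mul_sum, hdsum] at h1
      simp only [smul_eq_mul] at h1
      omega
    -- pointwise upper bound
    have hpt : ∀ A ∈ ℱ,
        (H \ A).card + 2 * (if (H \ A).card = 0 then 1 else 0)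
          + (if (H \ A).card = 1 then 1 else 0)
        ≤ 2 + 2 * (if A = ∅ then 1 else 0) + (if (H \ A).card = 3 then 1 else 0) := by
      intro A hA
      by_cases hAe : A = ∅
      · subst hAe
        rw [Finset.sdiff_empty, hH4]
        norm_num
      · have := F2 A hA hAe
        simp only [if_neg hAe]
        interval_cases h : (H \ A).card <;> norm_num
    have hsumpt := Finset.sum_le_sum hpt
    rw [Finset.sum_add_distrib, Finset.sum_add_distrib, Finset.sum_add_distrib,
      Finset.sum_add_distrib, ← Finset.mul_sum, ← Finset.mul_sum] at hsumpt
    rw [← Finset.card_filter, ← Finset.card_filter, ← Finset.card_filter, ← Finset.card_filter,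
      Finset.sum_const, Finset.filter_eq', if_pos hempty] at hsumpt
    simp only [smul_eq_mul, mul_one, Finset.card_singleton] at hsumpt
    have hup : ∑ A ∈ ℱ, (H \ A).card + 2 * N0 + N1 ≤ 2 * n + 2 + N3 := by
      rw [hN0, hN1, hN3]
      omega
    omega
  -- N3 is at most the size of K
  have hN3K : N3 ≤ K.card := by
    have himg : ℱ.filter (fun A => (H \ A).card = 3) ⊆ K.image (fun h => insert h W) := by
      intro A hA
      rw [Finset.mem_filter] at hA
      obtain ⟨h, hhH, rfl⟩ := F3 A hA.1 hA.2
      apply Finset.mem_image_of_mem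
      rw [hKdef, Finset.mem_filter]
      exact ⟨hhH, hA.1⟩
    calc N3 ≤ (K.image (fun h => insert h W)).card := Finset.card_le_card himg
      _ ≤ K.card := Finset.card_image_le
  -- N0 is at least 1 (M has empty trace)
  have hN0pos : 1 ≤ N0 := by
    rw [hN0]
    apply Finset.card_pos.mpr
    refine ⟨M, Finset.mem_filter.mpr ⟨hMmem, ?_⟩⟩
    rw [Finset.card_eq_zero, Finset.sdiff_eq_empty_iff_subset]
    exact hHM
  have hKcard : K.card ≤ 4 := by
    calc K.card ≤ H.card := Finset.card_le_card hKH
      _ = 4 := hH4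
  -- membership facts for K
  have hKmem : ∀ h ∈ K, insert h W ∈ ℱ := by
    intro h hh
    rw [hKdef, Finset.mem_filter] at hh
    exact hh.2
  have hcase : K.card = 2 ∨ K.card = 3 ∨ K.card = 4 := by omega
  rcases hcase with ht2 | ht3 | ht4
  · -- case t = 2
    obtain ⟨a, b, hab, hKab⟩ := Finset.card_eq_two.mp ht2
    have haK : a ∈ K := by rw [hKab]; simp
    have hbK : b ∈ K := by rw [hKab]; simp
    have haH : a ∈ H := hKH haK
    have hbH : b ∈ H := hKH hbK
    have hAa : insert a W ∈ ℱ := hKmem a haK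
    have hAb : insert b W ∈ ℱ := hKmem b hbK
    have hN1z : N1 = 0 := by omega
    have hnot1 : ∀ A ∈ ℱ, (H \ A).card ≠ 1 := by
      intro A hA h1
      have hm : A ∈ ℱ.filter (fun A => (H \ A).card = 1) :=
        Finset.mem_filter.mpr ⟨hA, h1⟩
      have : 0 < N1 := by
        rw [hN1]
        exact Finset.card_pos.mpr ⟨A, hm⟩
      omega
    have hclaim : ∀ A ∈ ℱ, a ∉ A → A = ∅ ∨ A = insert b W := by
      intro A hA haA
      by_contra hcon
      push_neg at hcon
      obtain ⟨hne, hneb⟩ := hcon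
      have haHA : a ∈ H \ A := Finset.mem_sdiff.mpr ⟨haH, haA⟩
      have hc1 : 1 ≤ (H \ A).card := Finset.card_pos.mpr ⟨a, haHA⟩
      have hc3 := F2 A hA hne.ne_empty
      have hcne1 := hnot1 A hA
      by_cases h3 : (H \ A).card = 3
      · obtain ⟨h, hhH, rfl⟩ := F3 A hA h3
        have hhK : h ∈ K := by
          rw [hKdef, Finset.mem_filter]; exact ⟨hhH, hA⟩
        rw [hKab, Finset.mem_insert, Finset.mem_singleton] at hhK
        rcases hhK with rfl | rfl
        · exact haA (Finset.mem_insert_self h W)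
        · exact hneb rfl
      · have h2 : (H \ A).card = 2 := by omega
        have hB : A ∪ insert a W ∈ ℱ := hUC _ hA _ hAa
        have htr : H \ (A ∪ insert a W) = (H \ A).erase a := by
          ext x
          simp only [Finset.mem_sdiff, Finset.mem_union, Finset.mem_insert, Finset.mem_erase]
          constructor
          · rintro ⟨hxH, hx⟩
            push_neg at hx
            exact ⟨hx.2.1, hxH, hx.1⟩
          · rintro ⟨hxa, hxH, hxA⟩
            refine ⟨hxH, ?_⟩
            push_neg
            exact ⟨hxA, hxa, hHnotW x hxH⟩
        have hc : (H \ (A ∪ insert a W)).card = 1 := by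
          rw [htr, Finset.card_erase_of_mem haHA, h2]
        exact hnot1 _ hB hc
    have hfilter : ℱ.filter (fun A => a ∉ A) = {∅, insert b W} := by
      ext A
      simp only [Finset.mem_filter, Finset.mem_insert, Finset.mem_singleton]
      constructor
      · rintro ⟨hA, haA⟩
        exact hclaim A hA haA
      · rintro (rfl | rfl)
        · exact ⟨hempty, Finset.notMem_empty a⟩
        · refine ⟨hAb, ?_⟩
          simp only [Finset.mem_insert]
          push_neg
          exact ⟨hab, hHnotW a haH⟩
    have hdcard : (ℱ.filter (fun A => a ∉ A)).card = 2 := by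
      rw [hfilter]
      rw [Finset.card_insert_of_notMem, Finset.card_singleton]
      simp only [Finset.mem_singleton]
      exact fun h => (Finset.insert_ne_empty b W) h.symm
    have hhv := hheavy a haH
    rw [hdcard] at hhv
    -- now n ≤ 3, but ℱ contains four distinct sets
    have hcAa : (insert a W).card = 3 := by
      rw [Finset.card_insert_of_notMem (hHnotW a haH), hW2]
    have hcAb : (insert b W).card = 3 := by
      rw [Finset.card_insert_of_notMem (hHnotW b hbH), hW2]
    have hsub4 : ({∅, insert a W, insert b W, M} : Finset (Finset ℕ)) ⊆ ℱ := by
      intro A hA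
      simp only [Finset.mem_insert, Finset.mem_singleton] at hA
      rcases hA with rfl | rfl | rfl | rfl
      · exact hempty
      · exact hAa
      · exact hAb
      · exact hMmem
    have hcard4 : ({∅, insert a W, insert b W, M} : Finset (Finset ℕ)).card = 4 := by
      rw [Finset.card_insert_of_notMem, Finset.card_insert_of_notMem,
        Finset.card_insert_of_notMem, Finset.card_singleton]
      · simp only [Finset.mem_singleton]
        intro h
        rw [h] at hcAb
        omega
      · simp only [Finset.mem_insert, Finset.mem_singleton]
        push_neg
        constructor
        · intro h
          apply hab
          have : a ∈ insert b W := h ▸ Finset.mem_insert_self a W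
          rcases Finset.mem_insert.mp this with h' | h'
          · exact h'
          · exact absurd h' (hHnotW a haH)
        · intro h
          rw [h] at hcAa
          omega
      · simp only [Finset.mem_insert, Finset.mem_singleton]
        push_neg
        refine ⟨?_, ?_, ?_⟩
        · exact fun h => (Finset.insert_ne_empty a W) h.symm
        · exact fun h => (Finset.insert_ne_empty b W) h.symm
        · intro h
          have : M.card = 0 := by rw [← h]; rfl
          omega
    have hn4 : 4 ≤ n := by
      rw [hn, ← hcard4]
      exact Finset.card_le_card hsub4
    omega
  · -- case t = 3
    have hN1le : N1 ≤ 1 := by omega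
    obtain ⟨a, b, c, hab, hac, hbc, hKabc⟩ := Finset.card_eq_three.mp ht3
    have haK : a ∈ K := by rw [hKabc]; simp
    have hbK : b ∈ K := by rw [hKabc]; simp
    have hcK : c ∈ K := by rw [hKabc]; simp
    have haH : a ∈ H := hKH haK
    have hbH : b ∈ H := hKH hbK
    have hcH : c ∈ H := hKH hcK
    have haW : a ∉ W := hHnotW a haH
    have hbW : b ∉ W := hHnotW b hbH
    have hcW : c ∉ W := hHnotW c hcH
    have hAa : insert a W ∈ ℱ := hKmem a haK
    have hAb : insert b W ∈ ℱ := hKmem b hbK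
    have hAc : insert c W ∈ ℱ := hKmem c hcK
    set E5 := insert a W ∪ (insert b W ∪ insert c W) with hE5def
    have hE5F : E5 ∈ ℱ := hUC _ hAa _ (hUC _ hAb _ hAc)
    have hE5KW : E5 = K ∪ W := by
      rw [hE5def, hKabc]
      ext x
      simp only [Finset.mem_union, Finset.mem_insert, Finset.mem_singleton]
      tauto
    have hE5tr : H \ E5 = H \ K := by
      rw [hE5KW]
      ext x
      simp only [Finset.mem_sdiff, Finset.mem_union]
      constructor
      · rintro ⟨hxH, hx⟩
        exact ⟨hxH, fun h => hx (Or.inl h)⟩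
      · rintro ⟨hxH, hx⟩
        refine ⟨hxH, fun h => ?_⟩
        rcases h with h | h
        · exact hx h
        · exact hHnotW x hxH h
    have hE5t1 : (H \ E5).card = 1 := by
      rw [hE5tr, Finset.card_sdiff_of_subset hKH, hH4, ht3]
    -- the key structural claim
    have hclaim : ∀ x y : ℕ, x ∈ K → y ∈ K → x ≠ y →
        ∀ A ∈ ℱ, A ≠ ∅ → x ∉ A → y ∉ A → ∃ h ∈ K, A = insert h W := by
      intro x y hxK hyK hxy A hA hAne hxA hyA
      have hxyHA : ({x, y} : Finset ℕ) ⊆ H \ A := by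
        intro u hu
        simp only [Finset.mem_insert, Finset.mem_singleton] at hu
        rcases hu with rfl | rfl
        · exact Finset.mem_sdiff.mpr ⟨hKH hxK, hxA⟩
        · exact Finset.mem_sdiff.mpr ⟨hKH hyK, hyA⟩
      have hxyc : ({x, y} : Finset ℕ).card = 2 := by
        rw [Finset.card_insert_of_notMem (by simpa using hxy), Finset.card_singleton]
      have hge2 : 2 ≤ (H \ A).card := by
        rw [← hxyc]
        exact Finset.card_le_card hxyHA
      have hle3 := F2 A hA hAne
      by_cases h3 : (H \ A).card = 3
      · obtain ⟨h, hhH, rfl⟩ := F3 A hA h3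
        exact ⟨h, by rw [hKdef, Finset.mem_filter]; exact ⟨hhH, hA⟩, rfl⟩
      · exfalso
        have h2 : (H \ A).card = 2 := by omega
        have hHA : ({x, y} : Finset ℕ) = H \ A :=
          Finset.eq_of_subset_of_card_le hxyHA (by omega)
        have hB : A ∪ insert x W ∈ ℱ := hUC _ hA _ (hKmem x hxK)
        have htrB : H \ (A ∪ insert x W) = {y} := by
          have h1 : H \ (A ∪ insert x W) = (H \ A).erase x := by
            ext u
            simp only [Finset.mem_sdiff, Finset.mem_union, Finset.mem_insert,
              Finset.mem_erase]
            constructor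
            · rintro ⟨huH, hu⟩
              push_neg at hu
              exact ⟨hu.2.1, huH, hu.1⟩
            · rintro ⟨hux, huH, huA⟩
              refine ⟨huH, ?_⟩
              push_neg
              exact ⟨huA, hux, hHnotW u huH⟩
          rw [h1, ← hHA, Finset.erase_insert (by simpa using hxy)]
        have hBt1 : (H \ (A ∪ insert x W)).card = 1 := by
          rw [htrB]; rfl
        have hBneE5 : A ∪ insert x W ≠ E5 := by
          intro h
          have hyB : y ∈ H \ (A ∪ insert x W) := by
            rw [htrB]; exact Finset.mem_singleton_self y
          rw [h, hE5tr, Finset.mem_sdiff] at hyB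
          exact hyB.2 hyK
        have hsub2 : ({A ∪ insert x W, E5} : Finset (Finset ℕ))
            ⊆ ℱ.filter (fun A => (H \ A).card = 1) := by
          intro B hB'
          simp only [Finset.mem_insert, Finset.mem_singleton] at hB'
          rcases hB' with rfl | rfl
          · exact Finset.mem_filter.mpr ⟨hB, hBt1⟩
          · exact Finset.mem_filter.mpr ⟨hE5F, hE5t1⟩
        have : 2 ≤ N1 := by
          rw [hN1]
          calc 2 = ({A ∪ insert x W, E5} : Finset (Finset ℕ)).card := by
                rw [Finset.card_insert_of_notMem (by simpa using hBneE5),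
                  Finset.card_singleton]
            _ ≤ _ := Finset.card_le_card hsub2
        omega
    -- cardinalities of the six exceptional sets
    have hcAa : (insert a W).card = 3 := by
      rw [Finset.card_insert_of_notMem haW, hW2]
    have hcAb : (insert b W).card = 3 := by
      rw [Finset.card_insert_of_notMem hbW, hW2]
    have hcAc : (insert c W).card = 3 := by
      rw [Finset.card_insert_of_notMem hcW, hW2]
    have hcE5 : E5.card = 5 := by
      rw [hE5KW, Finset.card_union_of_disjoint, ht3, hW2]
      rw [Finset.disjoint_left]
      intro x hx
      exact hHnotW x (hKH hx)
    -- distinctness of the six exceptional sets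
    have hne_ab : insert a W ≠ insert b W := by
      intro h
      have : a ∈ insert b W := h ▸ Finset.mem_insert_self a W
      simp only [Finset.mem_insert] at this
      tauto
    have hne_ac : insert a W ≠ insert c W := by
      intro h
      have : a ∈ insert c W := h ▸ Finset.mem_insert_self a W
      simp only [Finset.mem_insert] at this
      tauto
    have hne_bc : insert b W ≠ insert c W := by
      intro h
      have : b ∈ insert c W := h ▸ Finset.mem_insert_self b W
      simp only [Finset.mem_insert] at this
      tauto
    set E : Finset (Finset ℕ) :=
      {∅, insert a W, insert b W, insert c W, E5, M} with hEdef
    have hEsub : E ⊆ ℱ := by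
      intro A hA
      simp only [hEdef, Finset.mem_insert, Finset.mem_singleton] at hA
      rcases hA with rfl | rfl | rfl | rfl | rfl | rfl
      · exact hempty
      · exact hAa
      · exact hAb
      · exact hAc
      · exact hE5F
      · exact hMmem
    have hnm5 : E5 ∉ ({M} : Finset (Finset ℕ)) := by
      simp only [Finset.mem_singleton]
      intro h
      rw [h, hMcard] at hcE5
      omega
    have hnm4 : insert c W ∉ ({E5, M} : Finset (Finset ℕ)) := by
      simp only [Finset.mem_insert, Finset.mem_singleton]
      push_neg
      constructor
      · intro h; rw [h, hcE5] at hcAc; omega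
      · intro h; rw [h, hMcard] at hcAc; omega
    have hnm3 : insert b W ∉ ({insert c W, E5, M} : Finset (Finset ℕ)) := by
      simp only [Finset.mem_insert, Finset.mem_singleton]
      push_neg
      refine ⟨hne_bc, ?_, ?_⟩
      · intro h; rw [h, hcE5] at hcAb; omega
      · intro h; rw [h, hMcard] at hcAb; omega
    have hnm2 : insert a W ∉ ({insert b W, insert c W, E5, M} : Finset (Finset ℕ)) := by
      simp only [Finset.mem_insert, Finset.mem_singleton]
      push_neg
      refine ⟨hne_ab, hne_ac, ?_, ?_⟩
      · intro h; rw [h, hcE5] at hcAa; omega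
      · intro h; rw [h, hMcard] at hcAa; omega
    have hnm1 : (∅ : Finset ℕ)
        ∉ ({insert a W, insert b W, insert c W, E5, M} : Finset (Finset ℕ)) := by
      simp only [Finset.mem_insert, Finset.mem_singleton]
      push_neg
      refine ⟨?_, ?_, ?_, ?_, ?_⟩
      · exact fun h => Finset.insert_ne_empty a W h.symm
      · exact fun h => Finset.insert_ne_empty b W h.symm
      · exact fun h => Finset.insert_ne_empty c W h.symm
      · intro h; rw [← h] at hcE5; simp at hcE5
      · intro h; rw [← h] at hMcard; simp at hMcard
    have hEcard : E.card = 6 := by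
      rw [hEdef, Finset.card_insert_of_notMem hnm1, Finset.card_insert_of_notMem hnm2,
        Finset.card_insert_of_notMem hnm3, Finset.card_insert_of_notMem hnm4,
        Finset.card_insert_of_notMem hnm5, Finset.card_singleton]
    have hn6 : 6 ≤ n := by
      rw [hn, ← hEcard]
      exact Finset.card_le_card hEsub
    -- evaluate the trace-sum over K on the exceptional sets
    have hKerase : ∀ x ∈ K, (K \ insert x W).card = 2 := by
      intro x hx
      have : K \ insert x W = K.erase x := by
        ext u
        simp only [Finset.mem_sdiff, Finset.mem_insert, Finset.mem_erase]
        constructor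
        · rintro ⟨huK, hu⟩
          push_neg at hu
          exact ⟨hu.1, huK⟩
        · rintro ⟨hux, huK⟩
          refine ⟨huK, ?_⟩
          push_neg
          exact ⟨hux, hHnotW u (hKH huK)⟩
      rw [this, Finset.card_erase_of_mem hx, ht3]
    have hsumE : ∑ A ∈ E, (K \ A).card = 9 := by
      rw [hEdef, Finset.sum_insert hnm1, Finset.sum_insert hnm2, Finset.sum_insert hnm3,
        Finset.sum_insert hnm4, Finset.sum_insert hnm5, Finset.sum_singleton]
      have h0 : (K \ ∅).card = 3 := by rw [Finset.sdiff_empty, ht3]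
      have hE5v : (K \ E5).card = 0 := by
        rw [Finset.card_eq_zero, Finset.sdiff_eq_empty_iff_subset, hE5KW]
        exact Finset.subset_union_left
      have hMv : (K \ M).card = 0 := by
        rw [Finset.card_eq_zero, Finset.sdiff_eq_empty_iff_subset]
        exact fun x hx => hHM (hKH hx)
      rw [h0, hKerase a haK, hKerase b hbK, hKerase c hcK, hE5v, hMv]
      norm_num
    -- every non-exceptional set misses at most one element of K
    have hother : ∀ A ∈ ℱ \ E, (K \ A).card ≤ 1 := by
      intro A hA
      rw [Finset.mem_sdiff] at hA
      obtain ⟨hAF, hAE⟩ := hA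
      by_contra hgt
      push_neg at hgt
      obtain ⟨x, hx, y, hy, hxy⟩ := Finset.one_lt_card.mp hgt
      rw [Finset.mem_sdiff] at hx hy
      have hAne : A ≠ ∅ := by
        intro h
        apply hAE
        rw [h, hEdef]
        simp
      obtain ⟨h, hhK, rfl⟩ := hclaim x y hx.1 hy.1 hxy A hAF hAne hx.2 hy.2
      apply hAE
      rw [hKabc] at hhK
      simp only [Finset.mem_insert, Finset.mem_singleton] at hhK
      rw [hEdef]
      simp only [Finset.mem_insert, Finset.mem_singleton]
      rcases hhK with rfl | rfl | rfl
      · exact Or.inr (Or.inl rfl)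
      · exact Or.inr (Or.inr (Or.inl rfl))
      · exact Or.inr (Or.inr (Or.inr (Or.inl rfl)))
    -- the weighted count over K
    have hdsumK : ∑ x ∈ K, (ℱ.filter (fun A => x ∉ A)).card
        = ∑ A ∈ ℱ, (K \ A).card := by
      rw [dcount]
      apply Finset.sum_congr rfl
      intro A _
      congr 1
      rw [Finset.sdiff_eq_filter]
    have hlowK : 3 * (n + 1) ≤ 2 * ∑ A ∈ ℱ, (K \ A).card := by
      have h1 : ∑ x ∈ K, (n + 1) ≤ ∑ x ∈ K, 2 * (ℱ.filter (fun A => x ∉ A)).card :=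
        Finset.sum_le_sum (fun x hx => hheavy x (hKH hx))
      rw [Finset.sum_const, ht3, ← Finset.mul_sum, hdsumK] at h1
      simpa using h1
    have hsplit : ∑ A ∈ ℱ \ E, (K \ A).card + ∑ A ∈ E, (K \ A).card
        = ∑ A ∈ ℱ, (K \ A).card := Finset.sum_sdiff hEsub
    have hotherbound : ∑ A ∈ ℱ \ E, (K \ A).card ≤ n - 6 := by
      calc ∑ A ∈ ℱ \ E, (K \ A).card ≤ ∑ A ∈ ℱ \ E, 1 := Finset.sum_le_sum hother
        _ = (ℱ \ E).card := by rw [Finset.sum_const, smul_eq_mul, mul_one]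
        _ = n - 6 := by rw [Finset.card_sdiff_of_subset hEsub, hEcard]
    omega
  · -- case t = 4
    have hN1le : N1 ≤ 2 := by omega
    obtain ⟨S3, hS3K, hS3c⟩ := Finset.exists_subset_card_eq (show 3 ≤ K.card by omega)
    obtain ⟨h1, h2, h3, h12, h13, h23, hS3⟩ := Finset.card_eq_three.mp hS3c
    have hh1K : h1 ∈ K := hS3K (by simp [hS3])
    have hh2K : h2 ∈ K := hS3K (by simp [hS3])
    have hh3K : h3 ∈ K := hS3K (by simp [hS3])
    have hh4ex : (K \ S3).Nonempty := by
      apply Finset.card_pos.mp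
      rw [Finset.card_sdiff_of_subset hS3K, hS3c, ht4]
      omega
    obtain ⟨h4, hh4⟩ := hh4ex
    rw [Finset.mem_sdiff, hS3] at hh4
    obtain ⟨hh4K, hh4S⟩ := hh4
    simp only [Finset.mem_insert, Finset.mem_singleton] at hh4S
    push_neg at hh4S
    have h14 : h1 ≠ h4 := Ne.symm hh4S.1
    have h24 : h2 ≠ h4 := Ne.symm hh4S.2.1
    have h34 : h3 ≠ h4 := Ne.symm hh4S.2.2
    -- trace of a triple union
    have htrace3 : ∀ p q r : ℕ, H \ (insert p W ∪ (insert q W ∪ insert r W))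
        = H \ ({p, q, r} : Finset ℕ) := by
      intro p q r
      ext x
      simp only [Finset.mem_sdiff, Finset.mem_union, Finset.mem_insert, Finset.mem_singleton]
      constructor <;> rintro ⟨hxH, hx⟩ <;> have hxW := hHnotW x hxH <;>
        exact ⟨hxH, by tauto⟩
    have hcard3 : ∀ p q r : ℕ, p ∈ K → q ∈ K → r ∈ K → p ≠ q → p ≠ r → q ≠ r →
        (H \ ({p, q, r} : Finset ℕ)).card = 1 := by
      intro p q r hp hq hr hpq hpr hqr
      have hsub : ({p, q, r} : Finset ℕ) ⊆ H := by
        intro x hx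
        simp only [Finset.mem_insert, Finset.mem_singleton] at hx
        rcases hx with rfl | rfl | rfl
        · exact hKH hp
        · exact hKH hq
        · exact hKH hr
      have hc : ({p, q, r} : Finset ℕ).card = 3 := by
        rw [Finset.card_insert_of_notMem, Finset.card_insert_of_notMem,
          Finset.card_singleton]
        · simp only [Finset.mem_singleton]; exact hqr
        · simp only [Finset.mem_insert, Finset.mem_singleton]
          push_neg
          exact ⟨hpq, hpr⟩
      rw [Finset.card_sdiff_of_subset hsub, hH4, hc]
    set U1 := insert h2 W ∪ (insert h3 W ∪ insert h4 W) with hU1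
    set U2 := insert h1 W ∪ (insert h3 W ∪ insert h4 W) with hU2
    set U3 := insert h1 W ∪ (insert h2 W ∪ insert h4 W) with hU3
    have hU1F : U1 ∈ ℱ := hUC _ (hKmem _ hh2K) _ (hUC _ (hKmem _ hh3K) _ (hKmem _ hh4K))
    have hU2F : U2 ∈ ℱ := hUC _ (hKmem _ hh1K) _ (hUC _ (hKmem _ hh3K) _ (hKmem _ hh4K))
    have hU3F : U3 ∈ ℱ := hUC _ (hKmem _ hh1K) _ (hUC _ (hKmem _ hh2K) _ (hKmem _ hh4K))
    have hU1t : (H \ U1).card = 1 := by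
      rw [hU1, htrace3]; exact hcard3 _ _ _ hh2K hh3K hh4K h23 h24 h34
    have hU2t : (H \ U2).card = 1 := by
      rw [hU2, htrace3]; exact hcard3 _ _ _ hh1K hh3K hh4K h13 h14 h34
    have hU3t : (H \ U3).card = 1 := by
      rw [hU3, htrace3]; exact hcard3 _ _ _ hh1K hh2K hh4K h12 h14 h24
    have hW1 : h1 ∉ W := hHnotW h1 (hKH hh1K)
    have hW2' : h2 ∉ W := hHnotW h2 (hKH hh2K)
    have h21 : h2 ≠ h1 := Ne.symm h12
    have hh1U1 : h1 ∉ U1 := by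
      simp only [hU1, Finset.mem_union, Finset.mem_insert]
      tauto
    have hh1U2 : h1 ∈ U2 := Finset.mem_union_left _ (Finset.mem_insert_self h1 W)
    have hh1U3 : h1 ∈ U3 := Finset.mem_union_left _ (Finset.mem_insert_self h1 W)
    have hh2U2 : h2 ∉ U2 := by
      simp only [hU2, Finset.mem_union, Finset.mem_insert]
      tauto
    have hh2U3 : h2 ∈ U3 :=
      Finset.mem_union_right _ (Finset.mem_union_left _ (Finset.mem_insert_self h2 W))
    have hUne12 : U1 ≠ U2 := fun h => hh1U1 (h ▸ hh1U2)
    have hUne13 : U1 ≠ U3 := fun h => hh1U1 (h ▸ hh1U3)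
    have hUne23 : U2 ≠ U3 := fun h => hh2U2 (h ▸ hh2U3)
    have hsubU : ({U1, U2, U3} : Finset (Finset ℕ))
        ⊆ ℱ.filter (fun A => (H \ A).card = 1) := by
      intro A hA
      simp only [Finset.mem_insert, Finset.mem_singleton] at hA
      rcases hA with rfl | rfl | rfl
      · exact Finset.mem_filter.mpr ⟨hU1F, hU1t⟩
      · exact Finset.mem_filter.mpr ⟨hU2F, hU2t⟩
      · exact Finset.mem_filter.mpr ⟨hU3F, hU3t⟩
    have hcardU : ({U1, U2, U3} : Finset (Finset ℕ)).card = 3 := by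
      rw [Finset.card_insert_of_notMem, Finset.card_insert_of_notMem,
        Finset.card_singleton]
      · simp only [Finset.mem_singleton]; exact hUne23
      · simp only [Finset.mem_insert, Finset.mem_singleton]
        push_neg
        exact ⟨hUne12, hUne13⟩
    have hN1ge : 3 ≤ N1 := by
      rw [hN1, ← hcardU]
      exact Finset.card_le_card hsubU
    omega

theorem stmt_12 (ℱ : Finset (Finset ℕ))
    (hsub : ∀ A ∈ ℱ, A ⊆ ({1,2,3,4,5,6} : Finset ℕ))
    (hUC : ∀ A ∈ ℱ, ∀ B ∈ ℱ, A ∪ B ∈ ℱ)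
    (hempty : ∅ ∈ ℱ)
    (hcover : ∀ x ∈ ({1,2,3,4,5,6} : Finset ℕ), ∃ A ∈ ℱ, x ∈ A)
    (hT3 : (∃ A ∈ ℱ, A.card = 3) ∧ ∀ A ∈ ℱ, A ≠ ∅ → 3 ≤ A.card) :
    ∃ x ∈ ({1,2,3,4,5,6} : Finset ℕ), ∃ y ∈ ({1,2,3,4,5,6} : Finset ℕ),
      ∃ z ∈ ({1,2,3,4,5,6} : Finset ℕ), x ≠ y ∧ x ≠ z ∧ y ≠ z ∧
        2 * (ℱ.filter (fun A => x ∈ A)).card ≥ ℱ.card ∧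
        2 * (ℱ.filter (fun A => y ∈ A)).card ≥ ℱ.card ∧
        2 * (ℱ.filter (fun A => z ∈ A)).card ≥ ℱ.card := by
  set M : Finset ℕ := {1,2,3,4,5,6} with hMdef
  -- M itself belongs to the family
  have hMmem : M ∈ ℱ := by
    obtain ⟨A1, hA1, h1⟩ := hcover 1 (by simp [hMdef])
    obtain ⟨A2, hA2, h2⟩ := hcover 2 (by simp [hMdef])
    obtain ⟨A3, hA3, h3⟩ := hcover 3 (by simp [hMdef])
    obtain ⟨A4, hA4, h4⟩ := hcover 4 (by simp [hMdef])
    obtain ⟨A5, hA5, h5⟩ := hcover 5 (by simp [hMdef])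
    obtain ⟨A6, hA6, h6⟩ := hcover 6 (by simp [hMdef])
    have hB : A1 ∪ (A2 ∪ (A3 ∪ (A4 ∪ (A5 ∪ A6)))) ∈ ℱ :=
      hUC _ hA1 _ (hUC _ hA2 _ (hUC _ hA3 _ (hUC _ hA4 _ (hUC _ hA5 _ hA6))))
    have hBM : A1 ∪ (A2 ∪ (A3 ∪ (A4 ∪ (A5 ∪ A6)))) = M := by
      apply Finset.Subset.antisymm (hsub _ hB)
      intro x hx
      simp only [hMdef, Finset.mem_insert, Finset.mem_singleton] at hx
      rcases hx with rfl | rfl | rfl | rfl | rfl | rfl <;>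
        simp [Finset.mem_union, h1, h2, h3, h4, h5, h6]
    rwa [hBM] at hB
  by_cases hR : 3 ≤ (M.filter (fun x => ℱ.card ≤ 2 * (ℱ.filter (fun A => x ∈ A)).card)).card
  · obtain ⟨S, hSR, hS3⟩ := Finset.exists_subset_card_eq hR
    obtain ⟨x, y, z, hxy, hxz, hyz, hSxyz⟩ := Finset.card_eq_three.mp hS3
    have hx := hSR (show x ∈ S by simp [hSxyz])
    have hy := hSR (show y ∈ S by simp [hSxyz])
    have hz := hSR (show z ∈ S by simp [hSxyz])
    rw [Finset.mem_filter] at hx hy hz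
    exact ⟨x, hx.1, y, hy.1, z, hz.1, hxy, hxz, hyz, hx.2, hy.2, hz.2⟩
  · exfalso
    have hcards := Finset.card_filter_add_card_filter_not
      (s := M) (p := fun x => ℱ.card ≤ 2 * (ℱ.filter (fun A => x ∈ A)).card)
    have hM6 : M.card = 6 := by decide
    have hHv : 4 ≤ (M.filter (fun x => ¬ ℱ.card ≤ 2 * (ℱ.filter (fun A => x ∈ A)).card)).card := by
      omega
    obtain ⟨H, hHsub, hH4⟩ := Finset.exists_subset_card_eq hHv
    apply main_contra ℱ M H hM6 hsub hUC hempty hMmem hT3.2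
      (hHsub.trans (Finset.filter_subset _ _)) hH4
    intro x hx
    have hx' := hHsub hx
    rw [Finset.mem_filter] at hx'
    have hsplit := Finset.card_filter_add_card_filter_not
      (s := ℱ) (p := fun A => x ∈ A)
    simp only [not_le] at hx'
    omega
end

section
/- Let 𝒢 be a family of 3-element subsets of M₆ = {1,2,3,4,5,6} containing the set {1,2,3}, such that |A ∪ B| = 5 for every two distinct A, B ∈ 𝒢. Then 𝒢 contains at most one set from each of the three families {{1,4,5},{2,4,5},{3,4,5}}, {{1,4,6},{2,4,6},{3,4,6}}, and {{1,5,6},{2,5,6},{3,5,6}}, and every member of 𝒢 other than {1,2,3} lies in the union of these three families. -/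
theorem stmt_14 (𝒢 : Finset (Finset ℕ))
    (h𝒢 : ∀ A ∈ 𝒢, A ⊆ ({1,2,3,4,5,6} : Finset ℕ) ∧ A.card = 3)
    (hmem : ({1,2,3} : Finset ℕ) ∈ 𝒢)
    (hunion : ∀ A ∈ 𝒢, ∀ B ∈ 𝒢, A ≠ B → (A ∪ B).card = 5) :
    (𝒢 ∩ ({{1,4,5}, {2,4,5}, {3,4,5}} : Finset (Finset ℕ))).card ≤ 1 ∧
    (𝒢 ∩ ({{1,4,6}, {2,4,6}, {3,4,6}} : Finset (Finset ℕ))).card ≤ 1 ∧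
    (𝒢 ∩ ({{1,5,6}, {2,5,6}, {3,5,6}} : Finset (Finset ℕ))).card ≤ 1 ∧
    ∀ A ∈ 𝒢, A ≠ ({1,2,3} : Finset ℕ) →
      A ∈ ({{1,4,5}, {2,4,5}, {3,4,5}, {1,4,6}, {2,4,6}, {3,4,6},
            {1,5,6}, {2,5,6}, {3,5,6}} : Finset (Finset ℕ)) := by
  refine ⟨?_, ?_, ?_, ?_⟩
  · rw [Finset.card_le_one]
    intro a ha b hb
    simp only [Finset.mem_inter] at ha hb
    by_contra hne
    have h := hunion a ha.1 b hb.1 hne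
    have ha2 := ha.2; have hb2 := hb.2
    fin_cases ha2 <;> fin_cases hb2 <;> revert h hne <;> decide
  · rw [Finset.card_le_one]
    intro a ha b hb
    simp only [Finset.mem_inter] at ha hb
    by_contra hne
    have h := hunion a ha.1 b hb.1 hne
    have ha2 := ha.2; have hb2 := hb.2
    fin_cases ha2 <;> fin_cases hb2 <;> revert h hne <;> decide
  · rw [Finset.card_le_one]
    intro a ha b hb
    simp only [Finset.mem_inter] at ha hb
    by_contra hne
    have h := hunion a ha.1 b hb.1 hne
    have ha2 := ha.2; have hb2 := hb.2
    fin_cases ha2 <;> fin_cases hb2 <;> revert h hne <;> decide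
  · intro A hA hne
    obtain ⟨hsub, hcard⟩ := h𝒢 A hA
    have hu := hunion A hA _ hmem hne
    have hp : A ∈ (({1,2,3,4,5,6} : Finset ℕ).powersetCard 3) :=
      Finset.mem_powersetCard.mpr ⟨hsub, hcard⟩
    fin_cases hp <;> revert hu hne <;> decide
end
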